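/- arXiv:1910.06937 — 2 statements merged into one kernel-verified Lean document; each statement's English description precedes it below -/
import Mathlib

section
/- Suppose the set of saddle points of the Lagrangian L is nonempty and the infinite sequences generated by the inexact augmented Lagrangian method are well-defined. Then u^k -> 0 and y^k -> 0 as k -> infinity. -/
open scoped RealInnerProductSpace
open Filter

noncomputable section

/-- `Evec m` is `ℝ^m` with the Euclidean norm. -/
abbrev Evec (m : ℕ) := EuclideanSpace ℝ (Fin m)

/-- View a plain function `Fin m → ℝ` as a Euclidean vector. -/
def toE {m : ℕ} (v : Fin m → ℝ) : Evec m := WithLp.toLp 2 v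

/-- The dual space `ℝ^{m1} × ℝ^{m2}` with the Euclidean (ℓ²) product norm. -/
abbrev DualPair (m1 m2 : ℕ) := WithLp 2 (Evec m1 × Evec m2)

def mkDual {m1 m2 : ℕ} (lam : Evec m1) (mu : Evec m2) : DualPair m1 m2 := WithLp.toLp 2 (lam, mu)

/-- The primal-dual space `X × ℝ^{m1+m2}` with the Euclidean (ℓ²) product norm. -/
abbrev Triple (X : Type*) [NormedAddCommGroup X] (m1 m2 : ℕ) :=
  WithLp 2 (X × DualPair m1 m2)

def asT {X : Type*} [NormedAddCommGroup X] {m1 m2 : ℕ}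
    (q : X × DualPair m1 m2) : Triple X m1 m2 := WithLp.toLp 2 q

variable {X : Type*} [NormedAddCommGroup X] [InnerProductSpace ℝ X] [FiniteDimensional ℝ X]
variable {m1 m2 : ℕ}

/-- The Lagrangian `L(x, λ, μ) = f(x) + ⟨λ, h(x)⟩ + ⟨μ, g(x)⟩`. -/
def Lag (f : X → ℝ) (h : X → Evec m1) (g : X → Evec m2)
    (x : X) (lam : Evec m1) (mu : Evec m2) : ℝ :=
  f x + ⟪lam, h x⟫ + ⟪mu, g x⟫

/-- `(y, u, v) ∈ ∂L(x, λ, μ)`: the saddle subdifferential of the Lagrangian (for `μ ≥ 0`). -/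
def saddleSubdiff (f : X → ℝ) (h : X → Evec m1) (g : X → Evec m2)
    (x : X) (lam : Evec m1) (mu : Evec m2) (y : X) (u : Evec m1) (v : Evec m2) : Prop :=
  (∀ x' : X, Lag f h g x lam mu + ⟪y, x' - x⟫ ≤ Lag f h g x' lam mu) ∧
  (∀ (lam' : Evec m1) (mu' : Evec m2), (∀ i, 0 ≤ mu' i) →
    Lag f h g x lam' mu' ≤ Lag f h g x lam mu - ⟪u, lam' - lam⟫ - ⟪v, mu' - mu⟫)

/-- The set of saddle points of the Lagrangian: points `(x, (λ, μ))` with `μ ≥ 0`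
and `(0,0,0) ∈ ∂L(x, λ, μ)`. -/
def SaddlePoints (f : X → ℝ) (h : X → Evec m1) (g : X → Evec m2) :
    Set (X × DualPair m1 m2) :=
  {s | ∃ (x : X) (lam : Evec m1) (mu : Evec m2), s = (x, mkDual lam mu) ∧
    (∀ i, 0 ≤ mu i) ∧ saddleSubdiff f h g x lam mu 0 0 0}

/-- `X*`: the solution set of the primal problem (P). -/
def PrimalOpt (f : X → ℝ) (h : X → Evec m1) (g : X → Evec m2) : Set X :=
  {x | h x = 0 ∧ (∀ i, g x i ≤ 0) ∧
    ∀ x' : X, h x' = 0 → (∀ i, g x' i ≤ 0) → f x ≤ f x'}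

/-- The dual objective function `d(λ, μ) = inf_x L(x, λ, μ)`, valued in `EReal`. -/
def dualFun (f : X → ℝ) (h : X → Evec m1) (g : X → Evec m2)
    (lam : Evec m1) (mu : Evec m2) : EReal :=
  ⨅ x : X, ((Lag f h g x lam mu : ℝ) : EReal)

/-- `P*`: the solution set of the dual problem (D). -/
def DualOpt (f : X → ℝ) (h : X → Evec m1) (g : X → Evec m2) : Set (DualPair m1 m2) :=
  {p | ∃ (lam : Evec m1) (mu : Evec m2), p = mkDual lam mu ∧ (∀ i, 0 ≤ mu i) ∧
    ∀ (lam' : Evec m1) (mu' : Evec m2), (∀ i, 0 ≤ mu' i) →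
      dualFun f h g lam' mu' ≤ dualFun f h g lam mu}

/-- The augmented Lagrangian with penalty parameter `c`. -/
def AugLag (f : X → ℝ) (h : X → Evec m1) (g : X → Evec m2) (c : ℝ)
    (x : X) (lam : Evec m1) (mu : Evec m2) : ℝ :=
  f x + ⟪lam, h x⟫ + (c / 2) * ‖h x‖ ^ 2 +
    (1 / (2 * c)) * (‖toE (fun i => max 0 (mu i + c * g x i))‖ ^ 2 - ‖mu‖ ^ 2)

/-- The inexact augmented Lagrangian method of Eckstein and Silva, with relative error
tolerance `σ ∈ [0,1)` and penalty parameters `c k` with `inf_k c k > 0`. -/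
structure ALMSeq (f : X → ℝ) (h : X → Evec m1) (g : X → Evec m2)
    (σ : ℝ) (c : ℕ → ℝ) (x y w : ℕ → X)
    (lam : ℕ → Evec m1) (mu : ℕ → Evec m2) : Prop where
  sigma_nonneg : 0 ≤ σ
  sigma_lt_one : σ < 1
  c_pos : ∀ k, 0 < c k
  c_inf : ∃ cmin > 0, ∀ k, cmin ≤ c k
  mu0_nonneg : ∀ i, 0 ≤ mu 0 i
  /-- `y k` is a subgradient at `x k` of `x ↦ L_{c_k}(x, λ^{k-1}, μ^{k-1})`. -/
  subgrad : ∀ k, 1 ≤ k → ∀ x' : X,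
    AugLag f h g (c k) (x k) (lam (k - 1)) (mu (k - 1)) + ⟪y k, x' - x k⟫ ≤
      AugLag f h g (c k) x' (lam (k - 1)) (mu (k - 1))
  /-- The relative error criterion. -/
  err : ∀ k, 1 ≤ k →
    (2 / c k) * |⟪w (k - 1) - x k, y k⟫| + ‖y k‖ ^ 2 ≤
      σ * (‖h (x k)‖ ^ 2 +
        ‖toE (fun i => min (mu (k - 1) i / c k) (-(g (x k) i)))‖ ^ 2)
  lam_update : ∀ k, 1 ≤ k → lam k = lam (k - 1) + c k • h (x k)
  mu_update : ∀ k, 1 ≤ k → mu k = toE (fun i => max 0 (mu (k - 1) i + c k * g (x k) i))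
  w_update : ∀ k, 1 ≤ k → w k = w (k - 1) - c k • y k


section AuxiliaryLemmas

lemma aux_scalar_max (m a b c : ℝ) (hc : 0 < c) :
    (max 0 (m + c * b))^2 - (max 0 (m + c * a))^2 ≤
      2 * c * (max 0 (m + c * a)) * (b - a) + c^2 * (b - a)^2 := by
  set M := max 0 (m + c * a) with hM
  set N := max 0 (m + c * b) with hN
  have hM0 : 0 ≤ M := le_max_left _ _
  have hN0 : 0 ≤ N := le_max_left _ _
  have h1 : m + c * b ≤ M + c * (b - a) := by
    have : m + c * a ≤ M := le_max_right _ _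
    nlinarith
  have h2 : N ≤ max 0 (M + c * (b - a)) := max_le (le_max_left _ _) (le_trans h1 (le_max_right _ _))
  have h3 : N^2 ≤ (M + c * (b - a))^2 := by
    rcases le_or_gt (M + c * (b-a)) 0 with h | h
    · have : N ≤ 0 := h2.trans (by simp [max_eq_left h])
      have : N = 0 := le_antisymm this hN0
      nlinarith
    · have : N ≤ M + c * (b - a) := h2.trans (by rw [max_eq_right h.le])
      nlinarith
  nlinarith

lemma aux_compl (m gk mu' c : ℝ) (hc : 0 < c) (hmu' : 0 ≤ mu') :
    (mu' - max 0 (m + c * gk)) * (gk + min (m / c) (-gk)) ≤ 0 := by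
  rcases le_or_gt 0 (m + c * gk) with h | h
  · have : min (m / c) (-gk) = -gk := by
      apply min_eq_right
      rw [le_div_iff₀ hc]; nlinarith
    rw [this]; ring_nf; simp
  · have h1 : max 0 (m + c * gk) = 0 := max_eq_left h.le
    have h2 : m / c < -gk := by rw [div_lt_iff₀ hc]; nlinarith
    have h3 : min (m / c) (-gk) = m / c := min_eq_left h2.le
    have h4 : gk + m / c < 0 := by
      have : m / c + gk < -gk + gk := by linarith
      linarith
    rw [h3, h1]
    nlinarith

variable {X : Type*} [NormedAddCommGroup X] [InnerProductSpace ℝ X] [FiniteDimensional ℝ X]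
variable {m1 m2 : ℕ}

lemma evec_norm_sq {m : ℕ} (v : Fin m → ℝ) : ‖toE v‖^2 = ∑ i, (v i)^2 := by
  rw [show toE v = WithLp.toLp 2 v from rfl, PiLp.norm_sq_eq_of_L2]
  simp [sq_abs]

lemma evec_norm_sq' {m : ℕ} (v : Evec m) : ‖v‖^2 = ∑ i, (v i)^2 := by rw [← evec_norm_sq v.ofLp]; rfl

lemma evec_inner {m : ℕ} (a b : Evec m) : ⟪a, b⟫ = ∑ i, a i * b i := by
  simp [PiLp.inner_apply, RCLike.inner_apply, conj_trivial]
  exact Finset.sum_congr rfl fun i _ => mul_comm _ _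

lemma key_ineq {f : X → ℝ} {h : X → Evec m1} {g : X → Evec m2}
    {c : ℝ} (hc : 0 < c) (lamm : Evec m1) (muu : Evec m2) (x₀ xx : X) :
    AugLag f h g c xx lamm muu - AugLag f h g c x₀ lamm muu ≤
      Lag f h g xx (lamm + c • h x₀) (toE fun i => max 0 (muu i + c * g x₀ i)) -
      Lag f h g x₀ (lamm + c • h x₀) (toE fun i => max 0 (muu i + c * g x₀ i)) +
      (c/2) * (‖h xx - h x₀‖^2 + ∑ i, (g xx i - g x₀ i)^2) := by
  have hlam : ⟪lamm, h xx⟫ - ⟪lamm, h x₀⟫ + (c/2) * (‖h xx‖^2 - ‖h x₀‖^2)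
      = ⟪lamm + c • h x₀, h xx⟫ - ⟪lamm + c • h x₀, h x₀⟫ + (c/2) * ‖h xx - h x₀‖^2 := by
    have e1 := norm_sub_sq_real (h xx) (h x₀)
    have e2 : ⟪lamm + c • h x₀, h xx⟫ = ⟪lamm, h xx⟫ + c * ⟪h x₀, h xx⟫ := by
      rw [inner_add_left, real_inner_smul_left]
    have e3 : ⟪lamm + c • h x₀, h x₀⟫ = ⟪lamm, h x₀⟫ + c * ⟪h x₀, h x₀⟫ := by
      rw [inner_add_left, real_inner_smul_left]
    have e4 : ⟪h x₀, h xx⟫ = ⟪h xx, h x₀⟫ := real_inner_comm _ _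
    have e5 : ⟪h x₀, h x₀⟫ = ‖h x₀‖^2 := real_inner_self_eq_norm_sq _
    rw [e2, e3, e4, e5]
    nlinarith [e1]
  have hsum : ∑ i, ((max 0 (muu i + c * g xx i))^2) - ∑ i, ((max 0 (muu i + c * g x₀ i))^2)
      ≤ 2*c * (∑ i, (max 0 (muu i + c * g x₀ i)) * (g xx i - g x₀ i))
        + c^2 * ∑ i, (g xx i - g x₀ i)^2 := by
    rw [← Finset.sum_sub_distrib, Finset.mul_sum, Finset.mul_sum, ← Finset.sum_add_distrib]
    apply Finset.sum_le_sum
    intro i _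
    have := aux_scalar_max (muu i) (g x₀ i) (g xx i) c hc
    nlinarith [this]
  have hmu : (1/(2*c)) * (‖toE (fun i => max 0 (muu i + c * g xx i))‖^2 - ‖muu‖^2)
      - (1/(2*c)) * (‖toE (fun i => max 0 (muu i + c * g x₀ i))‖^2 - ‖muu‖^2)
      ≤ ⟪toE (fun i => max 0 (muu i + c * g x₀ i)), g xx⟫
        - ⟪toE (fun i => max 0 (muu i + c * g x₀ i)), g x₀⟫
        + (c/2) * ∑ i, (g xx i - g x₀ i)^2 := by
    rw [evec_norm_sq, evec_norm_sq, evec_inner, evec_inner]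
    have hiden : (∑ i, (toE (fun i => max 0 (muu i + c * g x₀ i)) : Evec m2) i * g xx i)
        - (∑ i, (toE (fun i => max 0 (muu i + c * g x₀ i)) : Evec m2) i * g x₀ i)
        = ∑ i, (max 0 (muu i + c * g x₀ i)) * (g xx i - g x₀ i) := by
      rw [← Finset.sum_sub_distrib]
      refine Finset.sum_congr rfl fun i _ => ?_
      simp only [toE, PiLp.toLp_apply]; ring
    rw [sub_eq_add_neg (_ * _), ← sub_eq_add_neg, hiden]
    have h2c : (0:ℝ) < 2 * c := by linarith
    set A := ∑ i, ((max 0 (muu i + c * g xx i))^2)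
    set B := ∑ i, ((max 0 (muu i + c * g x₀ i))^2)
    set S1 := ∑ i, (max 0 (muu i + c * g x₀ i)) * (g xx i - g x₀ i)
    set S2 := ∑ i, (g xx i - g x₀ i)^2
    have : (1/(2*c)) * (A - B) ≤ (1/(2*c)) * (2*c*S1 + c^2*S2) :=
      mul_le_mul_of_nonneg_left (by linarith [hsum]) (by positivity)
    have heq : (1/(2*c)) * (2*c*S1 + c^2*S2) = S1 + (c/2)*S2 := by
      field_simp
    nlinarith [this]
  simp only [Lag, AugLag]
  linarith [hlam, hmu]

lemma xside {f : X → ℝ} {h : X → Evec m1} {g : X → Evec m2}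
    (hf : ConvexOn ℝ Set.univ f)
    (hh : ∃ A : X →ᵃ[ℝ] Evec m1, ∀ z, h z = A z)
    (hg1 : ∀ i, ConvexOn ℝ Set.univ (fun z => g z i))
    (hg2 : ∀ i, ContDiff ℝ 1 (fun z => g z i))
    {c : ℝ} (hc : 0 < c) (lamm : Evec m1) (muu : Evec m2) (x₀ y : X)
    (hsub : ∀ x' : X, AugLag f h g c x₀ lamm muu + ⟪y, x' - x₀⟫ ≤ AugLag f h g c x' lamm muu) :
    ∀ x' : X, Lag f h g x₀ (lamm + c • h x₀) (toE fun i => max 0 (muu i + c * g x₀ i))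
        + ⟪y, x' - x₀⟫ ≤
      Lag f h g x' (lamm + c • h x₀) (toE fun i => max 0 (muu i + c * g x₀ i)) := by
  obtain ⟨A, hA⟩ := hh
  intro x'
  set lp := lamm + c • h x₀ with hlp
  set mp := (toE fun i => max 0 (muu i + c * g x₀ i)) with hmp
  set G : X → ℝ := fun z => Lag f h g z lp mp with hG
  set d := x' - x₀ with hd
  set R : X → ℝ := fun z => ‖h z - h x₀‖^2 + ∑ i, (g z i - g x₀ i)^2 with hR
  have hmp_nonneg : ∀ i, 0 ≤ mp i := fun i => le_max_left (0:ℝ) _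
  -- step inequality
  have hstep : ∀ z : X, G x₀ + ⟪y, z - x₀⟫ - (c/2) * R z ≤ G z := by
    intro z
    have h1 := hsub z
    have h2 := key_ineq (f := f) (h := h) (g := g) hc lamm muu x₀ z
    simp only [hG, hR, hlp, hmp] at *
    linarith
  -- convexity of G
  have hconv : ∀ t : ℝ, 0 ≤ t → t ≤ 1 → G (x₀ + t • d) ≤ (1 - t) * G x₀ + t * G x' := by
    intro t ht0 ht1
    have hsum1 : (1 - t) + t = 1 := by ring
    have h1t : 0 ≤ 1 - t := by linarith
    have hcombo : x₀ + t • d = (1 - t) • x₀ + t • x' := by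
      simp only [hd]; module
    rw [hcombo]
    have hfpart : f ((1-t) • x₀ + t • x') ≤ (1-t) * f x₀ + t * f x' := by
      have := hf.2 (Set.mem_univ x₀) (Set.mem_univ x') h1t ht0 hsum1
      simpa using this
    have hlampart : ⟪lp, h ((1-t) • x₀ + t • x')⟫
        = (1-t) * ⟪lp, h x₀⟫ + t * ⟪lp, h x'⟫ := by
      rw [hA, hA, hA, Convex.combo_affine_apply hsum1, inner_add_right,
        real_inner_smul_right, real_inner_smul_right]
    have hmupart : ⟪mp, g ((1-t) • x₀ + t • x')⟫
        ≤ (1-t) * ⟪mp, g x₀⟫ + t * ⟪mp, g x'⟫ := by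
      rw [evec_inner, evec_inner, evec_inner, Finset.mul_sum, Finset.mul_sum,
        ← Finset.sum_add_distrib]
      apply Finset.sum_le_sum
      intro i _
      have hgi : g ((1-t) • x₀ + t • x') i ≤ (1-t) * g x₀ i + t * g x' i := by
        have := (hg1 i).2 (Set.mem_univ x₀) (Set.mem_univ x') h1t ht0 hsum1
        simpa using this
      nlinarith [hmp_nonneg i, hgi]
    simp only [hG, Lag]
    linarith
  -- limit of R(x₀ + t d)/t
  have hlimR : Tendsto (fun t : ℝ => R (x₀ + t • d) / t) (nhdsWithin 0 (Set.Ioi 0)) (nhds 0) := by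
    have hhpart : Tendsto (fun t : ℝ => ‖h (x₀ + t • d) - h x₀‖^2 / t)
        (nhdsWithin 0 (Set.Ioi 0)) (nhds 0) := by
      have heq : ∀ t : ℝ, t ≠ 0 → ‖h (x₀ + t • d) - h x₀‖^2 / t = t * ‖A.linear d‖^2 := by
        intro t ht
        have : h (x₀ + t • d) - h x₀ = t • A.linear d := by
          rw [hA, hA, show x₀ + t • d = (t • d) +ᵥ x₀ from (add_comm _ _), AffineMap.map_vadd]
          simp [A.linear.map_smul]
        rw [this, norm_smul, Real.norm_eq_abs, mul_pow, sq_abs]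
        field_simp
      have h0 : Tendsto (fun t : ℝ => t * ‖A.linear d‖^2) (nhdsWithin 0 (Set.Ioi 0)) (nhds 0) := by
        have hid : Tendsto (fun t : ℝ => t) (nhdsWithin (0:ℝ) (Set.Ioi 0)) (nhds 0) :=
          tendsto_id.mono_left nhdsWithin_le_nhds
        have := hid.mul_const (‖A.linear d‖^2)
        simpa using this
      apply h0.congr'
      filter_upwards [self_mem_nhdsWithin] with t ht
      exact (heq t (ne_of_gt ht)).symm
    have hgpart : ∀ i, Tendsto (fun t : ℝ => (g (x₀ + t • d) i - g x₀ i)^2 / t)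
        (nhdsWithin 0 (Set.Ioi 0)) (nhds 0) := by
      intro i
      set φ : ℝ → ℝ := fun t => g (x₀ + t • d) i with hφ
      have hdiff : DifferentiableAt ℝ (fun z => g z i) x₀ :=
        ((hg2 i).differentiable one_ne_zero).differentiableAt
      have hline : HasDerivAt (fun t : ℝ => x₀ + t • d) d 0 := by
        simpa using ((hasDerivAt_id (0:ℝ)).smul_const d).const_add x₀
      have hdiff' : HasFDerivAt (fun z => g z i) (fderiv ℝ (fun z => g z i) x₀)
          (x₀ + (0:ℝ) • d) := by simpa using hdiff.hasFDerivAt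
      have hD : HasDerivAt φ ((fderiv ℝ (fun z => g z i) x₀) d) 0 := by
        have := hdiff'.comp_hasDerivAt (0:ℝ) hline
        exact this
      have hslope := hasDerivAt_iff_tendsto_slope.1 hD
      have hmul : Tendsto (fun t : ℝ => t * (slope φ 0 t)^2)
          (nhdsWithin 0 (Set.Ioi 0)) (nhds 0) := by
        have h1 : Tendsto (fun t : ℝ => t) (nhdsWithin (0:ℝ) (Set.Ioi 0)) (nhds 0) :=
          tendsto_id.mono_left nhdsWithin_le_nhds
        have h2 : Tendsto (fun t => (slope φ 0 t)^2) (nhdsWithin (0:ℝ) (Set.Ioi 0))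
            (nhds (((fderiv ℝ (fun z => g z i) x₀) d)^2)) := by
          exact ((hslope.mono_left (nhdsWithin_mono _ (fun t ht => ne_of_gt ht))).pow 2)
        simpa using h1.mul h2
      apply hmul.congr'
      filter_upwards [self_mem_nhdsWithin] with t ht
      have htne : t ≠ 0 := ne_of_gt ht
      have hφ0 : φ 0 = g x₀ i := by simp [hφ]
      rw [slope_def_field, sub_zero, ← hφ0]
      field_simp
      ring
    have hsum := hhpart.add (tendsto_finset_sum Finset.univ (fun i _ => hgpart i))
    have hsum0 : Tendsto (fun t : ℝ => ‖h (x₀ + t • d) - h x₀‖^2 / t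
        + ∑ i, (g (x₀ + t • d) i - g x₀ i)^2 / t) (nhdsWithin 0 (Set.Ioi 0)) (nhds 0) := by
      simpa using hsum
    apply hsum0.congr
    intro t
    simp only [hR, add_div, Finset.sum_div]
  -- combine
  have hIoc : ∀ t ∈ Set.Ioc (0:ℝ) 1,
      ⟪y, d⟫ - (c/2) * (R (x₀ + t • d) / t) ≤ G x' - G x₀ := by
    intro t ht
    obtain ⟨ht0, ht1⟩ := ht
    have h1 := hstep (x₀ + t • d)
    have h2 := hconv t ht0.le ht1
    have hip : ⟪y, (x₀ + t • d) - x₀⟫ = t * ⟪y, d⟫ := by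
      rw [add_sub_cancel_left, real_inner_smul_right]
    rw [hip] at h1
    have h3 : t * ⟪y, d⟫ - (c/2) * R (x₀ + t • d) ≤ t * (G x' - G x₀) := by linarith
    have h4 : t * (⟪y, d⟫ - (c/2) * (R (x₀ + t • d) / t)) ≤ t * (G x' - G x₀) := by
      have : t * (⟪y, d⟫ - (c/2) * (R (x₀ + t • d) / t))
          = t * ⟪y, d⟫ - (c/2) * R (x₀ + t • d) := by
        field_simp
      rw [this]; exact h3
    exact le_of_mul_le_mul_left h4 ht0
  have hev : ∀ᶠ t in (nhdsWithin (0:ℝ) (Set.Ioi 0)),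
      ⟪y, d⟫ - (c/2) * (R (x₀ + t • d) / t) ≤ G x' - G x₀ := by
    filter_upwards [Ioc_mem_nhdsGT_of_mem (by simp : (0:ℝ) ∈ Set.Ico (0:ℝ) 1)] with t ht
    exact hIoc t ht
  have hfinal : ⟪y, d⟫ ≤ G x' - G x₀ := by
    have htend : Tendsto (fun t : ℝ => ⟪y, d⟫ - (c/2) * (R (x₀ + t • d) / t))
        (nhdsWithin 0 (Set.Ioi 0)) (nhds (⟪y, d⟫)) := by
      have := (tendsto_const_nhds (α := ℝ) (x := ⟪y, d⟫) (f := nhdsWithin (0:ℝ) (Set.Ioi 0))).sub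
        ((hlimR.const_mul (c/2)))
      simpa using this
    exact le_of_tendsto htend hev
  simp only [hG, hd] at hfinal
  linarith
lemma aux_mu_diff (m gk c : ℝ) (hc : 0 < c) :
    m - max 0 (m + c * gk) = c * min (m / c) (-gk) := by
  rcases le_or_gt 0 (m + c * gk) with hcase | hcase
  · rw [max_eq_right hcase, min_eq_right (by rw [le_div_iff₀ hc]; nlinarith)]
    ring
  · rw [max_eq_left hcase.le, min_eq_left (by rw [div_le_iff₀ hc]; nlinarith)]
    field_simp
    simp

end AuxiliaryLemmas
set_option maxHeartbeats 1000000 in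
theorem eckstein_silva_alm_residuals_tend_to_zero {f : X → ℝ} {h : X → Evec m1} {g : X → Evec m2}
    (hf : ConvexOn ℝ Set.univ f)
    (hh : ∃ A : X →ᵃ[ℝ] Evec m1, ∀ z, h z = A z)
    (hg1 : ∀ i, ConvexOn ℝ Set.univ (fun z => g z i))
    (hg2 : ∀ i, ContDiff ℝ 1 (fun z => g z i))
    {σ : ℝ} {c : ℕ → ℝ} {x y w : ℕ → X} {lam : ℕ → Evec m1} {mu : ℕ → Evec m2}
    (halg : ALMSeq f h g σ c x y w lam mu)
    (hsad : (SaddlePoints f h g).Nonempty)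
 :
    Tendsto (fun k =>
        (c (k + 1))⁻¹ • (mkDual (lam k) (mu k) - mkDual (lam (k + 1)) (mu (k + 1))))
      atTop (nhds 0) ∧
    Tendsto (fun k => y (k + 1)) atTop (nhds 0) := by
  obtain ⟨s, hs⟩ := hsad
  obtain ⟨xs, ls, ms, -, hms, hsdl1, hsdl2⟩ := hs
  have hσ0 := halg.sigma_nonneg
  have hσ1 := halg.sigma_lt_one
  obtain ⟨cmin, hcmin0, hcmin⟩ := halg.c_inf
  have hcpos : ∀ k, 0 < c k := halg.c_pos
  -- nonnegativity of the multipliers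
  have hmu_nonneg : ∀ k i, 0 ≤ mu k i := by
    intro k
    induction k with
    | zero => exact halg.mu0_nonneg
    | succ n ih =>
      intro i
      rw [halg.mu_update (n+1) (by omega)]
      simp only [Nat.add_sub_cancel, toE]
      exact le_max_left (0:ℝ) _
  -- specialized update rules
  have hupd_lam : ∀ k, lam (k+1) = lam k + c (k+1) • h (x (k+1)) := by
    intro k; have := halg.lam_update (k+1) (by omega); simpa using this
  have hupd_mu : ∀ k, mu (k+1) = toE (fun i => max 0 (mu k i + c (k+1) * g (x (k+1)) i)) := by
    intro k; have := halg.mu_update (k+1) (by omega); simpa using this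
  have hupd_w : ∀ k, w (k+1) = w k - c (k+1) • y (k+1) := by
    intro k; have := halg.w_update (k+1) (by omega); simpa using this
  have hsubg : ∀ k, ∀ x' : X,
      AugLag f h g (c (k+1)) (x (k+1)) (lam k) (mu k) + ⟪y (k+1), x' - x (k+1)⟫ ≤
        AugLag f h g (c (k+1)) x' (lam k) (mu k) := by
    intro k; have := halg.subgrad (k+1) (by omega); simpa using this
  -- the dual residual vector and squared residual
  set v : ℕ → Evec m2 :=
    fun k => toE (fun i => min (mu k i / c (k+1)) (-(g (x (k+1)) i))) with hv
  have hvdef : ∀ k, v k = toE (fun i => min (mu k i / c (k+1)) (-(g (x (k+1)) i))) :=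
    fun _ => rfl
  set D : ℕ → ℝ := fun k => ‖h (x (k+1))‖^2 + ‖v k‖^2 with hDdef0
  have hDdef : ∀ k, D k = ‖h (x (k+1))‖^2 + ‖v k‖^2 := fun _ => rfl
  have hDnonneg : ∀ k, 0 ≤ D k := by
    intro k; rw [hDdef k]; positivity
  have herr : ∀ k, (2 / c (k+1)) * |⟪w k - x (k+1), y (k+1)⟫| + ‖y (k+1)‖^2 ≤ σ * D k := by
    intro k
    have := halg.err (k+1) (by omega)
    simp only [Nat.add_sub_cancel] at this
    rw [hDdef k, hvdef k]
    exact this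
  -- vector identity for the mu-update
  have hmu_diff : ∀ k, mu k - mu (k+1) = c (k+1) • v k := by
    intro k
    rw [hupd_mu k, hvdef k]
    ext i
    simp only [PiLp.sub_apply, PiLp.smul_apply, toE, PiLp.toLp_apply, smul_eq_mul]
    exact aux_mu_diff (mu k i) (g (x (k+1)) i) (c (k+1)) (hcpos (k+1))
  -- transferred subgradient inequality
  have hS1 : ∀ k, ∀ x' : X,
      Lag f h g (x (k+1)) (lam (k+1)) (mu (k+1)) + ⟪y (k+1), x' - x (k+1)⟫ ≤
        Lag f h g x' (lam (k+1)) (mu (k+1)) := by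
    intro k
    have := xside hf hh hg1 hg2 (hcpos (k+1)) (lam k) (mu k) (x (k+1)) (y (k+1)) (hsubg k)
    rw [← hupd_lam k, ← hupd_mu k] at this
    exact this
  -- monotonicity against the saddle point
  have hMON : ∀ k, ⟪y (k+1), xs - x (k+1)⟫ ≤
      ⟪h (x (k+1)), ls - lam (k+1)⟫ - ⟪v k, ms - mu (k+1)⟫ := by
    intro k
    have h1 := hS1 k xs
    have h2 : Lag f h g xs (lam (k+1)) (mu (k+1)) ≤ Lag f h g xs ls ms := by
      have := hsdl2 (lam (k+1)) (mu (k+1)) (hmu_nonneg (k+1))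
      simpa using this
    have h3 : Lag f h g xs ls ms ≤ Lag f h g (x (k+1)) ls ms := by
      have := hsdl1 (x (k+1))
      simpa using this
    have e1 : ⟪h (x (k+1)), ls - lam (k+1)⟫
        = ⟪ls, h (x (k+1))⟫ - ⟪lam (k+1), h (x (k+1))⟫ := by
      rw [real_inner_comm, inner_sub_left]
    have e2 : ⟪ms, g (x (k+1))⟫ - ⟪mu (k+1), g (x (k+1))⟫ + ⟪v k, ms - mu (k+1)⟫ ≤ 0 := by
      rw [evec_inner, evec_inner, evec_inner, ← Finset.sum_sub_distrib,
        ← Finset.sum_add_distrib]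
      apply Finset.sum_nonpos
      intro i _
      have hcompl := aux_compl (mu k i) (g (x (k+1)) i) (ms i) (c (k+1)) (hcpos (k+1)) (hms i)
      have hmuKi : mu (k+1) i = max 0 (mu k i + c (k+1) * g (x (k+1)) i) := by
        rw [hupd_mu k]; simp [toE]
      have hvki : v k i = min (mu k i / c (k+1)) (-(g (x (k+1)) i)) := by rw [hvdef k]; simp [toE]
      have hsub : (ms - mu (k+1)) i = ms i - mu (k+1) i := by simp
      rw [hsub, hvki, hmuKi]
      nlinarith [hcompl]
    have h4 : Lag f h g (x (k+1)) ls ms ≤ Lag f h g (x (k+1)) (lam (k+1)) (mu (k+1))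
        + ⟪h (x (k+1)), ls - lam (k+1)⟫ - ⟪v k, ms - mu (k+1)⟫ := by
      simp only [Lag]
      linarith [e1, e2]
    linarith [h1, h2, h3, h4]
  -- Fejér monotonicity
  have hFej : ∀ k,
      ‖w (k+1) - xs‖^2 + ‖lam (k+1) - ls‖^2 + ‖mu (k+1) - ms‖^2 ≤
        (‖w k - xs‖^2 + ‖lam k - ls‖^2 + ‖mu k - ms‖^2) - (1-σ) * (c (k+1))^2 * D k := by
    intro k
    set cK := c (k+1) with hcK
    have hcK0 : 0 < cK := hcpos (k+1)
    have e_w : ‖w (k+1) - xs‖^2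
        = ‖w k - xs‖^2 - 2*cK*⟪y (k+1), w k - xs⟫ + cK^2*‖y (k+1)‖^2 := by
      rw [hupd_w k, show w k - cK • y (k+1) - xs = (w k - xs) - cK • y (k+1) by abel,
        norm_sub_sq_real, real_inner_smul_right, norm_smul, Real.norm_eq_abs, mul_pow, sq_abs,
        real_inner_comm (w k - xs) (y (k+1))]
      ring
    have e_lam : ‖lam (k+1) - ls‖^2
        = ‖lam k - ls‖^2 + 2*cK*⟪h (x (k+1)), lam k - ls⟫ + cK^2*‖h (x (k+1))‖^2 := by
      rw [hupd_lam k, show lam k + cK • h (x (k+1)) - ls = (lam k - ls) + cK • h (x (k+1)) by abel,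
        norm_add_sq_real, real_inner_smul_right, norm_smul, Real.norm_eq_abs, mul_pow, sq_abs,
        real_inner_comm (lam k - ls) (h (x (k+1)))]
      ring
    have hmu_step : mu (k+1) = mu k - cK • v k := by
      rw [← hmu_diff k]; abel
    have e_mu : ‖mu (k+1) - ms‖^2
        = ‖mu k - ms‖^2 - 2*cK*⟪v k, mu k - ms⟫ + cK^2*‖v k‖^2 := by
      rw [hmu_step, show mu k - cK • v k - ms = (mu k - ms) - cK • v k by abel,
        norm_sub_sq_real, real_inner_smul_right, norm_smul, Real.norm_eq_abs, mul_pow, sq_abs,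
        real_inner_comm (mu k - ms) (v k)]
      ring
    have dec_w : 2*cK*⟪y (k+1), w k - xs⟫
        = 2*cK*⟪y (k+1), w k - x (k+1)⟫ + 2*cK*⟪y (k+1), x (k+1) - xs⟫ := by
      rw [inner_sub_right, inner_sub_right, inner_sub_right]; ring
    have dec_lam : 2*cK*⟪h (x (k+1)), lam (k+1) - ls⟫
        = 2*cK*⟪h (x (k+1)), lam k - ls⟫ + 2*cK^2*‖h (x (k+1))‖^2 := by
      rw [hupd_lam k, show lam k + cK • h (x (k+1)) - ls = (lam k - ls) + cK • h (x (k+1)) by abel,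
        inner_add_right, real_inner_smul_right, real_inner_self_eq_norm_sq]
      ring
    have dec_mu : 2*cK*⟪v k, mu (k+1) - ms⟫
        = 2*cK*⟪v k, mu k - ms⟫ - 2*cK^2*‖v k‖^2 := by
      rw [hmu_step, show mu k - cK • v k - ms = (mu k - ms) - cK • v k by abel,
        inner_sub_right, real_inner_smul_right, real_inner_self_eq_norm_sq]
      ring
    have flip1 : 2*cK*⟪y (k+1), x (k+1) - xs⟫ + 2*cK*⟪y (k+1), xs - x (k+1)⟫ = 0 := by
      rw [inner_sub_right, inner_sub_right]; ring
    have flip2 : 2*cK*⟪h (x (k+1)), ls - lam (k+1)⟫ + 2*cK*⟪h (x (k+1)), lam (k+1) - ls⟫ = 0 := by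
      rw [inner_sub_right, inner_sub_right]; ring
    have flip3 : 2*cK*⟪v k, ms - mu (k+1)⟫ + 2*cK*⟪v k, mu (k+1) - ms⟫ = 0 := by
      rw [inner_sub_right, inner_sub_right]; ring
    have hMONmul : 2*cK*⟪y (k+1), xs - x (k+1)⟫
        ≤ 2*cK*⟪h (x (k+1)), ls - lam (k+1)⟫ - 2*cK*⟪v k, ms - mu (k+1)⟫ := by
      have := hMON k
      nlinarith [this, hcK0]
    have herrmul : -(2*cK*⟪y (k+1), w k - x (k+1)⟫) + cK^2*‖y (k+1)‖^2
        ≤ σ * cK^2 * (‖h (x (k+1))‖^2 + ‖v k‖^2) := by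
      have he := herr k
      rw [hDdef k] at he
      have hkey : cK^2 * ((2 / cK) * |⟪w k - x (k+1), y (k+1)⟫| + ‖y (k+1)‖^2)
          ≤ cK^2 * (σ * (‖h (x (k+1))‖^2 + ‖v k‖^2)) :=
        mul_le_mul_of_nonneg_left he (by positivity)
      have heq : cK^2 * ((2 / cK) * |⟪w k - x (k+1), y (k+1)⟫| + ‖y (k+1)‖^2)
          = 2*cK*|⟪w k - x (k+1), y (k+1)⟫| + cK^2*‖y (k+1)‖^2 := by
        field_simp
      rw [heq] at hkey
      have habs : -⟪y (k+1), w k - x (k+1)⟫ ≤ |⟪w k - x (k+1), y (k+1)⟫| := by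
        rw [real_inner_comm]
        exact neg_le_abs _
      nlinarith [hkey, habs, hcK0]
    rw [hDdef k]
    linarith [e_w, e_lam, e_mu, dec_w, dec_lam, dec_mu, flip1, flip2, flip3, hMONmul, herrmul]
  -- summability and convergence of the residuals
  set aseq : ℕ → ℝ := fun k => ‖w k - xs‖^2 + ‖lam k - ls‖^2 + ‖mu k - ms‖^2 with haseq
  have ha_nonneg : ∀ k, 0 ≤ aseq k := by intro k; positivity
  set tseq : ℕ → ℝ := fun k => (1-σ) * (c (k+1))^2 * D k with htseq
  have hσ' : 0 < 1 - σ := by linarith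
  have ht_nonneg : ∀ k, 0 ≤ tseq k := by
    intro k
    have := hDnonneg k
    have := hcpos (k+1)
    positivity
  have hpartial : ∀ n, (∑ j ∈ Finset.range n, tseq j) + aseq n ≤ aseq 0 := by
    intro n
    induction n with
    | zero => simp
    | succ m ih =>
      rw [Finset.sum_range_succ]
      have := hFej m
      simp only [haseq, htseq]
      simp only [haseq, htseq] at ih
      linarith [this, ih]
  have hsummable : Summable tseq :=
    summable_of_sum_range_le (c := aseq 0) ht_nonneg
      (fun n => by linarith [hpartial n, ha_nonneg n])
  have ht0 : Tendsto tseq atTop (nhds 0) := hsummable.tendsto_atTop_zero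
  have hC0 : (0:ℝ) < (1-σ) * cmin^2 := by positivity
  have hDle : ∀ k, D k ≤ tseq k / ((1-σ) * cmin^2) := by
    intro k
    rw [le_div_iff₀ hC0]
    have h1 : cmin ≤ c (k+1) := hcmin (k+1)
    have h2 := hDnonneg k
    simp only [htseq]
    have hsq : cmin^2 ≤ c (k+1)^2 := by nlinarith [h1, hcmin0]
    nlinarith [mul_nonneg (sub_nonneg.mpr hsq) h2, hσ']
  have hD0 : Tendsto D atTop (nhds 0) := by
    have hup : Tendsto (fun k => tseq k / ((1-σ) * cmin^2)) atTop (nhds 0) := by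
      have := ht0.div_const ((1-σ) * cmin^2)
      simpa using this
    exact tendsto_of_tendsto_of_tendsto_of_le_of_le tendsto_const_nhds hup hDnonneg hDle
  constructor
  · -- dual residual
    have hnu : ∀ k, (c (k+1))⁻¹ • (mkDual (lam k) (mu k) - mkDual (lam (k+1)) (mu (k+1)))
        = mkDual (-(h (x (k+1)))) (v k) := by
      intro k
      have h1 : (c (k+1))⁻¹ • (mkDual (lam k) (mu k) - mkDual (lam (k+1)) (mu (k+1)))
          = mkDual ((c (k+1))⁻¹ • (lam k - lam (k+1))) ((c (k+1))⁻¹ • (mu k - mu (k+1))) := rfl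
      rw [h1]
      have h2 : (c (k+1))⁻¹ • (lam k - lam (k+1)) = -(h (x (k+1))) := by
        rw [hupd_lam k, show lam k - (lam k + c (k+1) • h (x (k+1)))
          = -(c (k+1) • h (x (k+1))) by abel, smul_neg, smul_smul,
          inv_mul_cancel₀ (ne_of_gt (hcpos (k+1))), one_smul]
      have h3 : (c (k+1))⁻¹ • (mu k - mu (k+1)) = v k := by
        rw [hmu_diff k, smul_smul, inv_mul_cancel₀ (ne_of_gt (hcpos (k+1))), one_smul]
      rw [h2, h3]
    have hnorm : ∀ k, ‖(c (k+1))⁻¹ • (mkDual (lam k) (mu k) - mkDual (lam (k+1)) (mu (k+1)))‖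
        = Real.sqrt (D k) := by
      intro k
      rw [hnu k]
      have : ‖mkDual (-(h (x (k+1)))) (v k)‖^2 = D k := by
        rw [WithLp.prod_norm_sq_eq_of_L2, hDdef k]
        simp [mkDual, norm_neg]
      rw [← this, Real.sqrt_sq (norm_nonneg _)]
    rw [tendsto_zero_iff_norm_tendsto_zero]
    have hsq : Tendsto (fun k => Real.sqrt (D k)) atTop (nhds 0) := by
      simpa using hD0.sqrt
    apply hsq.congr
    intro k
    exact (hnorm k).symm
  · -- primal residual
    have hy2 : ∀ k, ‖y (k+1)‖^2 ≤ σ * D k := by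
      intro k
      have he := herr k
      have habs : 0 ≤ (2 / c (k+1)) * |⟪w k - x (k+1), y (k+1)⟫| := by
        have := hcpos (k+1)
        positivity
      exact le_trans (le_add_of_nonneg_left habs) he
    have hy0 : Tendsto (fun k => ‖y (k+1)‖^2) atTop (nhds 0) := by
      have hup : Tendsto (fun k => σ * D k) atTop (nhds 0) := by
        have := hD0.const_mul σ
        simpa using this
      exact tendsto_of_tendsto_of_tendsto_of_le_of_le tendsto_const_nhds hup
        (fun k => by positivity) hy2
    rw [tendsto_zero_iff_norm_tendsto_zero]
    have hsq : Tendsto (fun k => Real.sqrt (‖y (k+1)‖^2)) atTop (nhds 0) := by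
      simpa using hy0.sqrt
    apply hsq.congr
    intro k
    exact Real.sqrt_sq (norm_nonneg _)
end
end

section
/- Suppose the set of saddle points of the Lagrangian L is nonempty and the infinite sequences generated by the inexact augmented Lagrangian method are well-defined. Then the whole dual sequence {p^k} converges to some optimal solution of the dual problem (D). -/
open scoped RealInnerProductSpace
open Filter

noncomputable section

variable {X : Type*} [NormedAddCommGroup X] [InnerProductSpace ℝ X] [FiniteDimensional ℝ X]
variable {m1 m2 : ℕ}

lemma toE_apply {m : ℕ} (v : Fin m → ℝ) (i : Fin m) : toE v i = v i := rfl

lemma einner {m : ℕ} (a b : Evec m) : ⟪a,b⟫ = ∑ i, a i * b i := by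
  simp [PiLp.inner_apply, RCLike.inner_apply, conj_trivial]
  exact Finset.sum_congr rfl (fun i _ => mul_comm _ _)

lemma enorm_sq {m : ℕ} (a : Evec m) : ‖a‖^2 = ∑ i, a i ^ 2 := by
  rw [← real_inner_self_eq_norm_sq, einner]
  simp only [sq]

lemma expandLag (f : X → ℝ) (h : X → Evec m1) (g : X → Evec m2) (z : X) (lam : Evec m1)
    (mu : Evec m2) : Lag f h g z lam mu = f z + ⟪lam, h z⟫ + ∑ i, mu i * g z i := by
  unfold Lag; rw [einner mu (g z)]

lemma expandAug (f : X → ℝ) (h : X → Evec m1) (g : X → Evec m2) (c : ℝ) (z : X) (lam : Evec m1)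
    (mu : Evec m2) : AugLag f h g c z lam mu =
      f z + ⟪lam, h z⟫ + (c/2)*‖h z‖^2
        + (1/(2*c))*((∑ i, (max 0 (mu i + c * g z i))^2) - ‖mu‖^2) := by
  unfold AugLag
  rw [enorm_sq (toE fun i => max 0 (mu i + c * g z i))]
  simp only [toE_apply]

lemma max_sq_le (a s0 s : ℝ) (ha0 : 0 ≤ a) (ha1 : s0 ≤ a) :
    (max 0 s)^2 ≤ (a + (s - s0))^2 := by
  rcases le_or_gt s 0 with hs | hs
  · rw [max_eq_left hs]
    simpa using sq_nonneg (a + (s - s0))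
  · rw [max_eq_right hs.le]
    nlinarith

lemma psi_bound {c : ℝ} (hc : 0 < c) (m t0 t : ℝ) :
    (1/(2*c)) * ((max 0 (m + c*t))^2 - (max 0 (m + c*t0))^2)
      ≤ (max 0 (m + c*t0)) * (t - t0) + (c/2) * (t - t0)^2 := by
  have h1 := max_sq_le (max 0 (m+c*t0)) (m+c*t0) (m+c*t) (le_max_left _ _) (le_max_right _ _)
  have h2 : (m + c*t) - (m + c*t0) = c*(t-t0) := by ring
  rw [h2] at h1
  have h3 : (max 0 (m+c*t))^2 - (max 0 (m+c*t0))^2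
      ≤ 2*c*((max 0 (m+c*t0))*(t-t0) + (c/2)*(t-t0)^2) := by nlinarith
  calc (1/(2*c)) * ((max 0 (m + c*t))^2 - (max 0 (m + c*t0))^2)
      ≤ (1/(2*c)) * (2*c*((max 0 (m+c*t0))*(t-t0) + (c/2)*(t-t0)^2)) := by
        apply mul_le_mul_of_nonneg_left h3 (by positivity)
    _ = (max 0 (m + c*t0)) * (t - t0) + (c/2) * (t - t0)^2 := by field_simp

lemma comp_second {c : ℝ} (hc : 0 < c) (m gi mui' : ℝ) (hmu' : 0 ≤ mui') :
    (mui' - max 0 (m + c*gi)) * (gi + min (m/c) (-gi)) ≤ 0 := by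
  rcases le_or_gt 0 (m + c*gi) with hs | hs
  · have : min (m/c) (-gi) = -gi := by
      rw [min_eq_right]
      rw [le_div_iff₀ hc]
      nlinarith
    rw [this]
    simp
  · have h0 : max 0 (m + c*gi) = 0 := max_eq_left hs.le
    have h1 : min (m/c) (-gi) = m/c := by
      rw [min_eq_left]
      rw [div_le_iff₀ hc]
      nlinarith
    have h2 : gi + m/c ≤ 0 := by
      have : (m + c*gi)/c < 0 := div_neg_of_neg_of_pos hs hc
      rw [show (m + c*gi)/c = m/c + gi from by field_simp] at this
      linarith
    rw [h0, h1]
    have := mul_nonpos_of_nonneg_of_nonpos (by linarith : (0:ℝ) ≤ mui' - 0) h2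
    simpa using this

lemma seg_bound {X : Type*} [NormedAddCommGroup X] [InnerProductSpace ℝ X]
    (φ : X → ℝ) (hφ : ConvexOn ℝ Set.univ φ) (x0 x' : X) {t : ℝ} (ht0 : 0 ≤ t) (ht1 : t ≤ 1) :
    |φ (x0 + t•(x'-x0)) - φ x0| ≤ t * max |φ x' - φ x0| |φ (x0 - (x' - x0)) - φ x0| := by
  set K := max |φ x' - φ x0| |φ (x0 - (x' - x0)) - φ x0| with hK
  have hup : φ (x0 + t•(x'-x0)) - φ x0 ≤ t * (φ x' - φ x0) := by
    have hcomb : x0 + t•(x'-x0) = (1-t)•x0 + t•x' := by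
      rw [smul_sub, sub_smul, one_smul]; abel
    rw [hcomb]
    have := hφ.2 (Set.mem_univ x0) (Set.mem_univ x') (by linarith : (0:ℝ) ≤ 1-t) ht0 (by ring)
    simp only [smul_eq_mul] at this
    nlinarith
  have hlo : -(t * (φ (x0 - (x'-x0)) - φ x0)) ≤ φ (x0 + t•(x'-x0)) - φ x0 := by
    have ht' : (0:ℝ) < 1 + t := by linarith
    have h : (1+t) ≠ 0 := ne_of_gt ht'
    have hcomb : x0 = (1/(1+t)) • (x0 + t•(x'-x0)) + (t/(1+t)) • (x0 - (x'-x0)) := by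
      match_scalars <;> (field_simp; try ring)
    have hconv := hφ.2 (Set.mem_univ (x0 + t•(x'-x0))) (Set.mem_univ (x0 - (x'-x0)))
      (by positivity : (0:ℝ) ≤ 1/(1+t)) (by positivity : (0:ℝ) ≤ t/(1+t))
      (by field_simp : 1/(1+t) + t/(1+t) = 1)
    rw [← hcomb] at hconv
    simp only [smul_eq_mul] at hconv
    have hconv' : φ x0 ≤ (φ (x0 + t•(x'-x0)) + t * φ (x0 - (x'-x0)))/(1+t) := by
      rw [show (φ (x0 + t•(x'-x0)) + t * φ (x0 - (x'-x0)))/(1+t)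
          = 1/(1+t) * φ (x0 + t•(x'-x0)) + t/(1+t) * φ (x0 - (x'-x0)) from by field_simp]
      exact hconv
    have h2 := (le_div_iff₀ ht').mp hconv'
    linarith
  have hK1 : φ x' - φ x0 ≤ K := le_trans (le_abs_self _) (le_max_left _ _)
  have hK2 : φ (x0 - (x'-x0)) - φ x0 ≤ K := le_trans (le_abs_self _) (le_max_right _ _)
  rw [abs_le]
  constructor
  · have := mul_le_mul_of_nonneg_left hK2 ht0
    linarith
  · have := mul_le_mul_of_nonneg_left hK1 ht0
    linarith

set_option maxHeartbeats 1000000 in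
lemma first_cond {f : X → ℝ} {h : X → Evec m1} {g : X → Evec m2}
    (hf : ConvexOn ℝ Set.univ f) (hh : ∃ A : X →ᵃ[ℝ] Evec m1, ∀ z, h z = A z)
    (hg1 : ∀ i, ConvexOn ℝ Set.univ (fun z => g z i))
    {c : ℝ} (hc : 0 < c) {lam0 : Evec m1} {mu0 : Evec m2} {x0 : X} {y : X}
    (hsub : ∀ x' : X, AugLag f h g c x0 lam0 mu0 + ⟪y, x' - x0⟫ ≤ AugLag f h g c x' lam0 mu0)
    (x' : X) :
    Lag f h g x0 (lam0 + c • h x0) (toE fun i => max 0 (mu0 i + c * g x0 i)) + ⟪y, x' - x0⟫ ≤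
      Lag f h g x' (lam0 + c • h x0) (toE fun i => max 0 (mu0 i + c * g x0 i)) := by
  obtain ⟨A, hA⟩ := hh
  set lamP : Evec m1 := lam0 + c • h x0 with hlamPdef
  set muP : Evec m2 := toE fun i => max 0 (mu0 i + c * g x0 i) with hmuPdef
  have hmuP : ∀ i, muP i = max 0 (mu0 i + c * g x0 i) := fun i => rfl
  have hmuPn : ∀ i, 0 ≤ muP i := fun i => le_max_left _ _
  set K : Fin m2 → ℝ := fun i =>
    max |g x' i - g x0 i| |g (x0 - (x' - x0)) i - g x0 i| with hKdef
  set C : ℝ := (c/2)*‖h x' - h x0‖^2 + (c/2) * ∑ i, (K i)^2 with hCdef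
  set D : ℝ := Lag f h g x' lamP muP - Lag f h g x0 lamP muP with hDdef
  have hlamPz : ∀ z : X, (⟪lamP, h z⟫:ℝ) = ⟪lam0, h z⟫ + c * ⟪h x0, h z⟫ := by
    intro z
    rw [hlamPdef, inner_add_left, real_inner_smul_left]
  have hinner_self : (⟪h x0, h x0⟫:ℝ) = ‖h x0‖^2 := real_inner_self_eq_norm_sq _
  -- main estimate for each t ∈ (0,1]
  have hmain : ∀ t : ℝ, 0 < t → t ≤ 1 → ⟪y, x' - x0⟫ ≤ D + t * C := by
    intro t ht0 ht1
    set xt : X := x0 + t • (x' - x0) with hxt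
    have hseg : h xt - h x0 = t • (h x' - h x0) := by
      have l1 : ∀ z : X, h z - h x0 = A.linear (z - x0) := by
        intro z
        rw [hA, hA, ← vsub_eq_sub, ← vsub_eq_sub, ← AffineMap.linearMap_vsub]
      rw [l1, show xt - x0 = t • (x' - x0) from by rw [hxt]; abel, map_smul,
        ← l1 x']
    -- Step A
    have hA1 : AugLag f h g c x0 lam0 mu0 + t * ⟪y, x' - x0⟫ ≤ AugLag f h g c xt lam0 mu0 := by
      have := hsub xt
      rwa [show xt - x0 = t • (x' - x0) from by rw [hxt]; abel,
        real_inner_smul_right] at this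
    have hnormseg : ‖h xt - h x0‖^2 = t^2 * ‖h x' - h x0‖^2 := by
      rw [hseg, norm_smul, mul_pow, Real.norm_eq_abs, sq_abs]
    have hlampart : (c/2)*‖h xt‖^2 - (c/2)*‖h x0‖^2 - c * ⟪h x0, h xt⟫ + c * ‖h x0‖^2
        = (c/2) * (t^2 * ‖h x' - h x0‖^2) := by
      rw [← hnormseg, norm_sub_sq_real, real_inner_comm (h x0) (h xt)]
      ring
    -- per-coordinate μ estimate
    have hmu_i : ∀ i : Fin m2,
        (1/(2*c)) * ((max 0 (mu0 i + c * g xt i))^2 - (max 0 (mu0 i + c * g x0 i))^2)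
          ≤ muP i * (g xt i - g x0 i) + (c/2) * (t^2 * (K i)^2) := by
      intro i
      have hpsi := psi_bound hc (mu0 i) (g x0 i) (g xt i)
      have habs : |g xt i - g x0 i| ≤ t * K i := by
        have := seg_bound (fun z => g z i) (hg1 i) x0 x' ht0.le ht1
        exact this
      have hsq : (g xt i - g x0 i)^2 ≤ t^2 * (K i)^2 := by
        have h1 : (g xt i - g x0 i)^2 ≤ (t * K i)^2 := by
          rw [← sq_abs (g xt i - g x0 i)]
          apply pow_le_pow_left₀ (abs_nonneg _) habs
        calc (g xt i - g x0 i)^2 ≤ (t * K i)^2 := h1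
          _ = t^2 * (K i)^2 := by ring
      rw [hmuP]
      nlinarith
    have hmusum :
        (1/(2*c)) * ((∑ i, (max 0 (mu0 i + c * g xt i))^2) - ∑ i, (max 0 (mu0 i + c * g x0 i))^2)
          ≤ (∑ i, muP i * g xt i) - (∑ i, muP i * g x0 i) + (c/2) * (t^2 * ∑ i, (K i)^2) := by
      calc (1/(2*c)) * ((∑ i, (max 0 (mu0 i + c * g xt i))^2) - ∑ i, (max 0 (mu0 i + c * g x0 i))^2)
          = ∑ i, (1/(2*c)) * ((max 0 (mu0 i + c * g xt i))^2 - (max 0 (mu0 i + c * g x0 i))^2) := by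
            rw [← Finset.mul_sum, Finset.sum_sub_distrib]
        _ ≤ ∑ i, (muP i * (g xt i - g x0 i) + (c/2) * (t^2 * (K i)^2)) :=
            Finset.sum_le_sum (fun i _ => hmu_i i)
        _ = (∑ i, muP i * g xt i) - (∑ i, muP i * g x0 i) + (c/2) * (t^2 * ∑ i, (K i)^2) := by
            have e1 : ∑ i, muP i * (g xt i - g x0 i)
                = (∑ i, muP i * g xt i) - (∑ i, muP i * g x0 i) := by
              rw [← Finset.sum_sub_distrib]
              exact Finset.sum_congr rfl (fun i _ => by ring)
            have e2 : ∑ i, (c/2) * (t^2 * (K i)^2) = (c/2) * (t^2 * ∑ i, (K i)^2) := by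
              rw [← Finset.mul_sum, ← Finset.mul_sum]
            rw [Finset.sum_add_distrib, e1, e2]
    -- abbreviations
    set St : ℝ := ∑ i, (max 0 (mu0 i + c * g xt i))^2 with hSt
    set S0 : ℝ := ∑ i, (max 0 (mu0 i + c * g x0 i))^2 with hS0
    set Gt : ℝ := ∑ i, muP i * g xt i with hGt
    set G0 : ℝ := ∑ i, muP i * g x0 i with hG0
    set Gx : ℝ := ∑ i, muP i * g x' i with hGx
    set SK : ℝ := ∑ i, (K i)^2 with hSK
    -- Step B assembly
    have hALdiff : AugLag f h g c xt lam0 mu0 - AugLag f h g c x0 lam0 mu0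
        = (⟪lam0, h xt⟫ - ⟪lam0, h x0⟫) + (f xt - f x0)
          + ((c/2)*‖h xt‖^2 - (c/2)*‖h x0‖^2) + (1/(2*c))*(St - S0) := by
      rw [expandAug, expandAug, hSt, hS0]
      ring
    have hLagdiff : Lag f h g xt lamP muP - Lag f h g x0 lamP muP
        = (⟪lam0, h xt⟫ - ⟪lam0, h x0⟫) + c * ⟪h x0, h xt⟫ - c * ‖h x0‖^2
          + (f xt - f x0) + (Gt - G0) := by
      rw [expandLag, expandLag, hlamPz, hlamPz, hinner_self, hGt, hG0]
      ring
    have hB : AugLag f h g c xt lam0 mu0 - AugLag f h g c x0 lam0 mu0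
        ≤ (Lag f h g xt lamP muP - Lag f h g x0 lamP muP) + t^2 * C := by
      rw [hALdiff, hLagdiff, hCdef]
      linarith [hmusum, hlampart]
    -- Step C : convexity
    have hcomb : xt = (1-t)•x0 + t•x' := by
      rw [hxt, smul_sub, sub_smul, one_smul]; abel
    have hfc : f xt ≤ (1-t) * f x0 + t * f x' := by
      rw [hcomb]
      have := hf.2 (Set.mem_univ x0) (Set.mem_univ x') (by linarith : (0:ℝ) ≤ 1-t) ht0.le (by ring)
      simpa [smul_eq_mul] using this
    have hlc : (⟪lamP, h xt⟫:ℝ) = ⟪lamP, h x0⟫ + t * (⟪lamP, h x'⟫ - ⟪lamP, h x0⟫) := by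
      have hx2 : h xt = h x0 + t • (h x' - h x0) := by
        rw [← hseg]; abel
      rw [hx2, inner_add_right, real_inner_smul_right, inner_sub_right]
      try ring
    have hgc : ∀ i, muP i * g xt i ≤ muP i * ((1-t) * g x0 i + t * g x' i) := by
      intro i
      apply mul_le_mul_of_nonneg_left _ (hmuPn i)
      rw [hcomb]
      have := (hg1 i).2 (Set.mem_univ x0) (Set.mem_univ x') (by linarith : (0:ℝ) ≤ 1-t) ht0.le (by ring)
      simpa [smul_eq_mul] using this
    have hgs : Gt ≤ (1-t) * G0 + t * Gx := by
      calc Gt ≤ ∑ i, muP i * ((1-t) * g x0 i + t * g x' i) :=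
            Finset.sum_le_sum (fun i _ => hgc i)
        _ = (1-t) * G0 + t * Gx := by
            rw [hG0, hGx, Finset.mul_sum, Finset.mul_sum, ← Finset.sum_add_distrib]
            exact Finset.sum_congr rfl (fun i _ => by ring)
    have hDexp : D = (f x' - f x0) + (⟪lamP, h x'⟫ - ⟪lamP, h x0⟫) + (Gx - G0) := by
      rw [hDdef, expandLag, expandLag, hGx, hG0]
      ring
    have hLt : Lag f h g xt lamP muP - Lag f h g x0 lamP muP
        = (f xt - f x0) + (⟪lamP, h xt⟫ - ⟪lamP, h x0⟫) + (Gt - G0) := by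
      rw [expandLag, expandLag, hGt, hG0]
      ring
    have hC1 : Lag f h g xt lamP muP - Lag f h g x0 lamP muP ≤ t * D := by
      rw [hLt, hDexp]
      have e2 : t * ((f x' - f x0) + (⟪lamP, h x'⟫ - ⟪lamP, h x0⟫) + (Gx - G0))
          = t * f x' - t * f x0 + (t * ⟪lamP, h x'⟫ - t * ⟪lamP, h x0⟫) + (t * Gx - t * G0) := by
        ring
      rw [e2]
      have e3 : (1-t) * f x0 + t * f x' = f x0 - t * f x0 + t * f x' := by ring
      have e4 : (1-t) * G0 + t * Gx = G0 - t * G0 + t * Gx := by ring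
      rw [e3] at hfc
      rw [e4] at hgs
      have e5 : ⟪lamP, h x0⟫ + t * (⟪lamP, h x'⟫ - ⟪lamP, h x0⟫)
          = ⟪lamP, h x0⟫ + (t * ⟪lamP, h x'⟫ - t * ⟪lamP, h x0⟫) := by ring
      rw [e5] at hlc
      linarith [hfc, hlc, hgs]
    -- combine
    have hty : t * ⟪y, x' - x0⟫ ≤ t * (D + t * C) := by
      have e : t * (D + t * C) = t * D + t^2 * C := by ring
      rw [e]
      linarith [hA1, hB, hC1]
    exact le_of_mul_le_mul_left hty ht0
  -- limit t → 0
  have hfin : ∀ n : ℕ, ⟪y, x' - x0⟫ ≤ D + (1/((n:ℝ)+1)) * C := by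
    intro n
    apply hmain
    · positivity
    · rw [div_le_one (by positivity)]
      linarith [Nat.cast_nonneg (α := ℝ) n]
  have hlim : Tendsto (fun n : ℕ => D + (1/((n:ℝ)+1)) * C) atTop (nhds D) := by
    have h2 := tendsto_one_div_add_atTop_nhds_zero_nat.mul_const C
    have h3 := (tendsto_const_nhds (x := D) (f := atTop (α := ℕ))).add h2
    simpa using h3
  have hDle : ⟪y, x' - x0⟫ ≤ D := ge_of_tendsto' hlim hfin
  rw [hDdef] at hDle
  linarith

lemma second_cond {f : X → ℝ} {h : X → Evec m1} {g : X → Evec m2}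
    {c : ℝ} (hc : 0 < c) (lam0 : Evec m1) (mu0 : Evec m2) (hmu0 : ∀ i, 0 ≤ mu0 i) (x0 : X)
    (lam' : Evec m1) (mu' : Evec m2) (hmu' : ∀ i, 0 ≤ mu' i) :
    Lag f h g x0 lam' mu' ≤
      Lag f h g x0 (lam0 + c • h x0) (toE fun i => max 0 (mu0 i + c * g x0 i))
        - ⟪-(h x0), lam' - (lam0 + c • h x0)⟫
        - ⟪toE fun i => min (mu0 i / c) (-(g x0 i)),
            mu' - toE fun i => max 0 (mu0 i + c * g x0 i)⟫ := by
  set lamP : Evec m1 := lam0 + c • h x0 with hlamPdef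
  set muP : Evec m2 := toE fun i => max 0 (mu0 i + c * g x0 i) with hmuPdef
  set v : Evec m2 := toE fun i => min (mu0 i / c) (-(g x0 i)) with hvdef
  have e1 : (⟪-(h x0), lam' - lamP⟫:ℝ) = ⟪lamP, h x0⟫ - ⟪lam', h x0⟫ := by
    rw [inner_neg_left, inner_sub_right, real_inner_comm (h x0) lam', real_inner_comm (h x0) lamP]
    ring
  have e2 : (⟪v, mu' - muP⟫:ℝ) = ∑ i, v i * (mu' i - muP i) := by
    rw [einner]
    exact Finset.sum_congr rfl (fun i _ => by rw [PiLp.sub_apply])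
  have key : ∑ i, (mu' i * g x0 i - muP i * g x0 i + v i * (mu' i - muP i)) ≤ 0 := by
    apply Finset.sum_nonpos
    intro i _
    have := comp_second hc (mu0 i) (g x0 i) (mu' i) (hmu' i)
    have hmuPi : muP i = max 0 (mu0 i + c * g x0 i) := rfl
    have hvi : v i = min (mu0 i / c) (-(g x0 i)) := rfl
    rw [hmuPi, hvi]
    nlinarith [this]
  rw [expandLag, expandLag, e1, e2]
  have e3 : ∑ i, (mu' i * g x0 i - muP i * g x0 i + v i * (mu' i - muP i))
      = (∑ i, mu' i * g x0 i) - (∑ i, muP i * g x0 i) + ∑ i, v i * (mu' i - muP i) := by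
    rw [Finset.sum_add_distrib, Finset.sum_sub_distrib]
  rw [e3] at key
  linarith [key]

lemma le_of_sq_le_sq' {a b : ℝ} (ha : 0 ≤ a) (hb : 0 ≤ b) (hab : a^2 ≤ b^2) : a ≤ b := by
  nlinarith

lemma dual_norm_sq (a : Evec m1) (b : Evec m2) : ‖mkDual a b‖^2 = ‖a‖^2 + ‖b‖^2 := by
  rw [← real_inner_self_eq_norm_sq, ← real_inner_self_eq_norm_sq, ← real_inner_self_eq_norm_sq]
  rfl

lemma triple_norm_sq (a : X) (b : DualPair m1 m2) : ‖asT (a, b)‖^2 = ‖a‖^2 + ‖b‖^2 := by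
  rw [← real_inner_self_eq_norm_sq, ← real_inner_self_eq_norm_sq, ← real_inner_self_eq_norm_sq]
  rfl

lemma triple_fst_le (a : X) (b : DualPair m1 m2) : ‖a‖ ≤ ‖asT (a, b)‖ := by
  apply le_of_sq_le_sq' (norm_nonneg _) (norm_nonneg _)
  rw [triple_norm_sq]
  nlinarith [sq_nonneg ‖b‖]

lemma triple_snd_le (a : X) (b : DualPair m1 m2) : ‖b‖ ≤ ‖asT (a, b)‖ := by
  apply le_of_sq_le_sq' (norm_nonneg _) (norm_nonneg _)
  rw [triple_norm_sq]
  nlinarith [sq_nonneg ‖a‖]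
set_option maxHeartbeats 2000000 in
theorem eckstein_silva_alm_dual_sequence_converges {f : X → ℝ} {h : X → Evec m1} {g : X → Evec m2}
    (hf : ConvexOn ℝ Set.univ f)
    (hh : ∃ A : X →ᵃ[ℝ] Evec m1, ∀ z, h z = A z)
    (hg1 : ∀ i, ConvexOn ℝ Set.univ (fun z => g z i))
    (hg2 : ∀ i, ContDiff ℝ 1 (fun z => g z i))
    {σ : ℝ} {c : ℕ → ℝ} {x y w : ℕ → X} {lam : ℕ → Evec m1} {mu : ℕ → Evec m2}
    (halg : ALMSeq f h g σ c x y w lam mu)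
    (hsad : (SaddlePoints f h g).Nonempty)
 :
    ∃ pinf ∈ DualOpt f h g,
      Tendsto (fun k => mkDual (lam k) (mu k)) atTop (nhds pinf) := by
  classical
  obtain ⟨s0, xs, ls, ms, hs0eq, hms, hsdd⟩ := hsad
  -- basic notation
  set P : ℕ → DualPair m1 m2 := fun k => mkDual (lam k) (mu k) with hPdef
  set Umu : ℕ → Evec m2 := fun k => toE fun i => min (mu (k-1) i / c k) (-(g (x k) i)) with hUmudef
  set U : ℕ → DualPair m1 m2 := fun k => mkDual (-(h (x k))) (Umu k) with hUdef
  set V : ℕ → Triple X m1 m2 := fun k => asT (y k, U k) with hVdef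
  set S : ℕ → Triple X m1 m2 := fun k => asT (w k, P k) with hSdef
  have hcpos := halg.c_pos
  -- nonnegativity of multipliers
  have hmun : ∀ k i, 0 ≤ mu k i := by
    intro k
    cases k with
    | zero => exact halg.mu0_nonneg
    | succ n =>
      intro i
      rw [halg.mu_update (n+1) (Nat.le_add_left 1 n)]
      exact le_max_left _ _
  -- saddle subdifferential of iterates
  have hfirst : ∀ k, 1 ≤ k → ∀ x' : X,
      Lag f h g (x k) (lam k) (mu k) + ⟪y k, x' - x k⟫ ≤ Lag f h g x' (lam k) (mu k) := by
    intro k hk x'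
    have hcl := first_cond hf hh hg1 (hcpos k) (halg.subgrad k hk) x'
    rwa [← halg.lam_update k hk, ← halg.mu_update k hk] at hcl
  have hsecond : ∀ k, 1 ≤ k → ∀ (lam' : Evec m1) (mu' : Evec m2), (∀ i, 0 ≤ mu' i) →
      Lag f h g (x k) lam' mu' ≤ Lag f h g (x k) (lam k) (mu k)
        - ⟪-(h (x k)), lam' - lam k⟫ - ⟪Umu k, mu' - mu k⟫ := by
    intro k hk lam' mu' hmu'
    have hcl := second_cond (f := f) (h := h) (g := g) (hcpos k) (lam (k-1)) (mu (k-1))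
      (hmun (k-1)) (x k) lam' mu' hmu'
    rwa [← halg.lam_update k hk, ← halg.mu_update k hk] at hcl
  -- recursions in vector form
  have hPrec : ∀ k, 1 ≤ k → P k = P (k-1) - c k • U k := by
    intro k hk
    have hcomp : P (k-1) - c k • U k
        = mkDual (lam (k-1) - c k • (-(h (x k)))) (mu (k-1) - c k • Umu k) := rfl
    rw [hcomp]
    have h1 : lam k = lam (k-1) - c k • (-(h (x k))) := by
      rw [halg.lam_update k hk, smul_neg, sub_neg_eq_add]
    have h2 : mu k = mu (k-1) - c k • Umu k := by
      rw [halg.mu_update k hk]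
      ext i
      have hUi : (c k • Umu k) i = c k * min (mu (k-1) i / c k) (-(g (x k) i)) := rfl
      have hsub : (mu (k-1) - c k • Umu k) i = mu (k-1) i - (c k • Umu k) i := rfl
      simp only [toE_apply]
      rw [hsub, hUi]
      rcases le_or_gt 0 (mu (k-1) i + c k * g (x k) i) with hc0 | hc0
      · rw [max_eq_right hc0, min_eq_right]
        · ring
        · rw [le_div_iff₀ (hcpos k)]
          nlinarith
      · rw [max_eq_left hc0.le, min_eq_left]
        · rw [mul_div_cancel₀ _ (ne_of_gt (hcpos k))]
          ring
        · rw [div_le_iff₀ (hcpos k)]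
          nlinarith
    show mkDual (lam k) (mu k)
        = mkDual (lam (k-1) - c k • (-(h (x k)))) (mu (k-1) - c k • Umu k)
    rw [h1, h2]
  have hSrec : ∀ k, 1 ≤ k → S k = S (k-1) - c k • V k := by
    intro k hk
    have hcomp : S (k-1) - c k • V k = asT (w (k-1) - c k • y k, P (k-1) - c k • U k) := rfl
    rw [hcomp, ← halg.w_update k hk, ← hPrec k hk]
  have hUnormsq : ∀ k, ‖U k‖^2 = ‖h (x k)‖^2 + ‖Umu k‖^2 := by
    intro k
    rw [hUdef]
    rw [dual_norm_sq, norm_neg]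
  have herr : ∀ k, 1 ≤ k →
      (2 / c k) * |⟪w (k-1) - x k, y k⟫| + ‖y k‖^2 ≤ σ * ‖U k‖^2 := by
    intro k hk
    rw [hUnormsq]
    exact halg.err k hk
  -- facts about the base saddle point
  have hhxs : h xs = 0 := by
    have h2 := hsdd.2 (ls + h xs) ms hms
    simp only [inner_zero_left, sub_zero] at h2
    rw [expandLag, expandLag, inner_add_left] at h2
    rw [← real_inner_self_nonpos]
    linarith
  have hgxs : ∀ i, g xs i ≤ 0 := by
    intro i
    have h2 := hsdd.2 ls (ms + EuclideanSpace.single i 1) (by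
      intro j
      rw [PiLp.add_apply, EuclideanSpace.single_apply]
      have := hms j
      by_cases hji : j = i <;> simp [hji] <;> linarith [hms i])
    simp only [inner_zero_left, sub_zero] at h2
    rw [expandLag, expandLag, ← einner, ← einner, inner_add_left,
      EuclideanSpace.inner_single_left] at h2
    simpa using h2
  have hmsg : (⟪ms, g xs⟫:ℝ) = 0 := by
    have hle : (⟪ms, g xs⟫:ℝ) ≤ 0 := by
      rw [einner]
      apply Finset.sum_nonpos
      intro i _
      exact mul_nonpos_of_nonneg_of_nonpos (hms i) (hgxs i)
    have hge : 0 ≤ (⟪ms, g xs⟫:ℝ) := by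
      have h2 := hsdd.2 ls 0 (fun i => le_refl 0)
      simp only [inner_zero_left, sub_zero] at h2
      rw [expandLag, expandLag, ← einner, ← einner, inner_zero_left] at h2
      linarith
    linarith
  have hLxs : Lag f h g xs ls ms = f xs := by
    rw [expandLag, ← einner, hhxs, inner_zero_right, hmsg]
    ring
  have hfxs_le : ∀ x' : X, f xs ≤ Lag f h g x' ls ms := by
    intro x'
    have h1 := hsdd.1 x'
    rw [inner_zero_left, hLxs, add_zero] at h1
    exact h1
  have hweak : ∀ (lam' : Evec m1) (mu' : Evec m2), (∀ i, 0 ≤ mu' i) →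
      Lag f h g xs lam' mu' ≤ f xs := by
    intro lam' mu' hmu'
    rw [expandLag, hhxs, inner_zero_right]
    have : ∑ i, mu' i * g xs i ≤ 0 := by
      apply Finset.sum_nonpos
      intro i _
      exact mul_nonpos_of_nonneg_of_nonpos (hmu' i) (hgxs i)
    linarith
  -- the "good point" predicate
  have hmono : ∀ (xb : X) (lb : Evec m1) (mb : Evec m2), (∀ i, 0 ≤ mb i) →
      saddleSubdiff f h g xb lb mb 0 0 0 → ∀ k, 1 ≤ k →
      ⟪y k, xb - x k⟫ + ⟪U k, mkDual lb mb - P k⟫ ≤ 0 := by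
    intro xb lb mb hmb hsd k hk
    have a1 := hfirst k hk xb
    have a2 := hsd.2 (lam k) (mu k) (hmun k)
    simp only [inner_zero_left, sub_zero] at a2
    have a3 := hsd.1 (x k)
    rw [inner_zero_left, add_zero] at a3
    have a4 := hsecond k hk lb mb hmb
    have hsplit : (⟪U k, mkDual lb mb - P k⟫:ℝ)
        = ⟪-(h (x k)), lb - lam k⟫ + ⟪Umu k, mb - mu k⟫ := rfl
    rw [hsplit]
    linarith
  have hFejer : ∀ (xb : X) (lb : Evec m1) (mb : Evec m2), (∀ i, 0 ≤ mb i) →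
      saddleSubdiff f h g xb lb mb 0 0 0 → ∀ k, 1 ≤ k →
      ‖S k - asT (xb, mkDual lb mb)‖^2
        ≤ ‖S (k-1) - asT (xb, mkDual lb mb)‖^2 - (1-σ) * (c k)^2 * ‖U k‖^2 := by
    intro xb lb mb hmb hsd k hk
    set Q : DualPair m1 m2 := mkDual lb mb with hQdef
    set Z : Triple X m1 m2 := asT (xb, Q) with hZdef
    set t : ℝ := ⟪w (k-1) - x k, y k⟫ with htdef
    set A : ℝ := ⟪x k - xb, y k⟫ with hAdef
    set B : ℝ := ⟪P k - Q, U k⟫ with hBdef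
    have hrw : S k - Z = (S (k-1) - Z) - c k • V k := by
      rw [hSrec k hk]
      abel
    have hsplit1 : (⟪S (k-1) - Z, V k⟫:ℝ) = ⟪w (k-1) - xb, y k⟫ + ⟪P (k-1) - Q, U k⟫ := by
      have e1 : (⟪S (k-1) - Z, V k⟫:ℝ)
          = ⟪w (k-1) - xb, y k⟫ + ⟪P (k-1) - Q, U k⟫ := by
        have : (⟪S (k-1) - Z, V k⟫:ℝ)
            = ⟪(S (k-1) - Z).ofLp.1, (V k).ofLp.1⟫ + ⟪(S (k-1) - Z).ofLp.2, (V k).ofLp.2⟫ := rfl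
        rw [this]
        rfl
      exact e1
    have hPU : (⟪P (k-1) - Q, U k⟫:ℝ) = B + c k * ‖U k‖^2 := by
      have hP1 : P (k-1) = P k + c k • U k := by
        rw [hPrec k hk]
        abel
      rw [hP1, show P k + c k • U k - Q = (P k - Q) + c k • U k from by abel,
        inner_add_left, real_inner_smul_left, real_inner_self_eq_norm_sq, hBdef]
    have hwsplit : (⟪w (k-1) - xb, y k⟫:ℝ) = t + A := by
      rw [htdef, hAdef, ← inner_add_left]
      congr 1
      abel
    have hinner2 : (⟪S (k-1) - Z, c k • V k⟫:ℝ)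
        = c k * t + c k * A + c k * B + (c k)^2 * ‖U k‖^2 := by
      rw [real_inner_smul_right, hsplit1, hPU, hwsplit]
      ring
    have hVn : ‖V k‖^2 = ‖y k‖^2 + ‖U k‖^2 := triple_norm_sq (y k) (U k)
    have hVsm : ‖c k • V k‖^2 = (c k)^2 * (‖y k‖^2 + ‖U k‖^2) := by
      rw [norm_smul, mul_pow, Real.norm_eq_abs, sq_abs, hVn]
    have hmono' := hmono xb lb mb hmb hsd k hk
    have hAB : 0 ≤ A + B := by
      have hA' : A = -⟪y k, xb - x k⟫ := by
        rw [hAdef, real_inner_comm, show x k - xb = -(xb - x k) from by abel, inner_neg_right]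
      have hB' : B = -⟪U k, Q - P k⟫ := by
        rw [hBdef, real_inner_comm, show P k - Q = -(Q - P k) from by abel, inner_neg_right,
          real_inner_comm]
      rw [hA', hB']
      linarith
    have hcAB : 0 ≤ c k * (A + B) := mul_nonneg (hcpos k).le hAB
    have he := herr k hk
    have he2 : 2 * c k * |t| + (c k)^2 * ‖y k‖^2 ≤ σ * (c k)^2 * ‖U k‖^2 := by
      have hmul := mul_le_mul_of_nonneg_left he (sq_nonneg (c k))
      have hc0 : c k ≠ 0 := ne_of_gt (hcpos k)
      have e : (c k)^2 * ((2 / c k) * |t| + ‖y k‖^2) = 2 * c k * |t| + (c k)^2 * ‖y k‖^2 := by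
        field_simp
      rw [e] at hmul
      linarith
    have habs : -t ≤ |t| := neg_le_abs t
    have h2ct : -(2 * c k * t) ≤ 2 * c k * |t| := by nlinarith [hcpos k]
    rw [hrw, norm_sub_sq_real, hinner2, hVsm]
    linarith
  -- Fejér sequence for the base saddle point
  set Z0 : Triple X m1 m2 := asT (xs, mkDual ls ms) with hZ0def
  set D : ℕ → ℝ := fun k => ‖S k - Z0‖^2 with hDdef
  have hD_fejer : ∀ k, 1 ≤ k → D k ≤ D (k-1) - (1-σ)*(c k)^2*‖U k‖^2 :=
    fun k hk => hFejer xs ls ms hms hsdd k hk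
  have hsig1 : (0:ℝ) < 1 - σ := by linarith [halg.sigma_lt_one]
  have hsig0 := halg.sigma_nonneg
  have hterm_nonneg : ∀ k, 0 ≤ (1-σ)*(c k)^2*‖U k‖^2 := fun k => by positivity
  have hD_anti : Antitone D := by
    apply antitone_nat_of_succ_le
    intro n
    have h1 := hD_fejer (n+1) (Nat.le_add_left 1 n)
    simp only [Nat.add_sub_cancel] at h1
    linarith [hterm_nonneg (n+1)]
  have hD_nonneg : ∀ k, 0 ≤ D k := fun k => sq_nonneg _
  have hD_bdd : BddBelow (Set.range D) := ⟨0, by rintro _ ⟨k, rfl⟩; exact hD_nonneg k⟩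
  have hDlim : Tendsto D atTop (nhds (⨅ k, D k)) := tendsto_atTop_ciInf hD_anti hD_bdd
  have hdiff0 : Tendsto (fun k => D k - D (k+1)) atTop (nhds 0) := by
    have h1 := hDlim.sub (hDlim.comp (tendsto_add_atTop_nat 1))
    simpa using h1
  have hterm0 : Tendsto (fun k => (c (k+1))^2 * ‖U (k+1)‖^2) atTop (nhds 0) := by
    apply squeeze_zero (fun k => by positivity)
      (g := fun k => (1/(1-σ)) * (D k - D (k+1)))
    · intro k
      have h1 := hD_fejer (k+1) (Nat.le_add_left 1 k)
      simp only [Nat.add_sub_cancel] at h1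
      rw [one_div, ← div_eq_inv_mul, le_div_iff₀ hsig1]
      nlinarith [h1]
    · have h1 := hdiff0.const_mul (1/(1-σ))
      simpa using h1
  have hcU2 : Tendsto (fun k => (c k)^2 * ‖U k‖^2) atTop (nhds 0) := by
    rw [← tendsto_add_atTop_iff_nat 1]
    exact hterm0
  obtain ⟨cmin, hcminpos, hcmin⟩ := halg.c_inf
  have hU2 : Tendsto (fun k => ‖U k‖^2) atTop (nhds 0) := by
    apply squeeze_zero (fun k => by positivity)
      (g := fun k => (1/cmin^2) * ((c k)^2 * ‖U k‖^2))
    · intro k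
      have h1 : cmin^2 ≤ (c k)^2 := by nlinarith [hcmin k, hcpos k]
      rw [one_div, ← div_eq_inv_mul, le_div_iff₀ (by positivity : (0:ℝ) < cmin^2)]
      nlinarith [sq_nonneg ‖U k‖]
    · have h1 := hcU2.const_mul (1/cmin^2)
      simpa using h1
  have hU0 : Tendsto (fun k => ‖U k‖) atTop (nhds 0) := by
    have h1 := hU2.sqrt
    simp only [Real.sqrt_zero] at h1
    have h2 : (fun k => Real.sqrt (‖U k‖^2)) = fun k => ‖U k‖ := by
      funext k
      exact Real.sqrt_sq (norm_nonneg _)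
    rwa [h2] at h1
  have hcU0 : Tendsto (fun k => c k * ‖U k‖) atTop (nhds 0) := by
    have h1 := hcU2.sqrt
    simp only [Real.sqrt_zero] at h1
    have h2 : (fun k => Real.sqrt ((c k)^2 * ‖U k‖^2)) = fun k => c k * ‖U k‖ := by
      funext k
      rw [show (c k)^2 * ‖U k‖^2 = (c k * ‖U k‖)^2 from by ring]
      exact Real.sqrt_sq (mul_nonneg (hcpos k).le (norm_nonneg _))
    rwa [h2] at h1
  have hy0 : Tendsto (fun k => ‖y k‖) atTop (nhds 0) := by
    apply squeeze_zero' (Eventually.of_forall (fun k => norm_nonneg _))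
      (g := fun k => ‖U k‖) _ hU0
    rw [eventually_atTop]
    refine ⟨1, fun k hk => ?_⟩
    apply le_of_sq_le_sq' (norm_nonneg _) (norm_nonneg _)
    have he := herr k hk
    have ht0 : 0 ≤ (2 / c k) * |⟪w (k-1) - x k, y k⟫| :=
      mul_nonneg (div_nonneg (by norm_num) (hcpos k).le) (abs_nonneg _)
    nlinarith [sq_nonneg ‖U k‖]
  -- boundedness
  set PB : ℝ := ‖Z0‖ + ‖S 0 - Z0‖ with hPBdef
  have hSZb : ∀ k, ‖S k - Z0‖ ≤ ‖S 0 - Z0‖ := by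
    intro k
    exact le_of_sq_le_sq' (norm_nonneg _) (norm_nonneg _) (hD_anti (Nat.zero_le k))
  have hSb : ∀ k, ‖S k‖ ≤ PB := by
    intro k
    calc ‖S k‖ = ‖Z0 + (S k - Z0)‖ := by rw [add_sub_cancel]
      _ ≤ ‖Z0‖ + ‖S k - Z0‖ := norm_add_le _ _
      _ ≤ PB := by rw [hPBdef]; linarith [hSZb k]
  have hPb : ∀ k, ‖P k‖ ≤ PB := fun k => le_trans (triple_snd_le (w k) (P k)) (hSb k)
  have hwb : ∀ k, ‖w k‖ ≤ PB := fun k => le_trans (triple_fst_le (w k) (P k)) (hSb k)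
  -- key lower bound on the Lagrangian
  have hlow_k : ∀ z : X, ∀ k, 1 ≤ k →
      f xs - (‖U k‖ * (‖mkDual ls ms‖ + PB) + ‖y k‖ * (‖z‖ + PB)
        + (σ/2) * ((c k * ‖U k‖) * ‖U k‖))
        ≤ Lag f h g z (lam k) (mu k) := by
    intro z k hk
    have a1 := hfirst k hk z
    have a4 := hsecond k hk ls ms hms
    have a3 := hfxs_le (x k)
    have hQP : (⟪-(h (x k)), ls - lam k⟫:ℝ) + ⟪Umu k, ms - mu k⟫
        = ⟪U k, mkDual ls ms - P k⟫ := rfl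
    have hQPb : |(⟪U k, mkDual ls ms - P k⟫:ℝ)| ≤ ‖U k‖ * (‖mkDual ls ms‖ + PB) := by
      calc |(⟪U k, mkDual ls ms - P k⟫:ℝ)| ≤ ‖U k‖ * ‖mkDual ls ms - P k‖ :=
            abs_real_inner_le_norm _ _
        _ ≤ ‖U k‖ * (‖mkDual ls ms‖ + ‖P k‖) :=
            mul_le_mul_of_nonneg_left (norm_sub_le _ _) (norm_nonneg _)
        _ ≤ ‖U k‖ * (‖mkDual ls ms‖ + PB) := by
            apply mul_le_mul_of_nonneg_left _ (norm_nonneg _)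
            linarith [hPb k]
    have hyz : (⟪y k, z - x k⟫:ℝ) = ⟪y k, z - w (k-1)⟫ + ⟪w (k-1) - x k, y k⟫ := by
      rw [show z - x k = (z - w (k-1)) + (w (k-1) - x k) from by abel, inner_add_right,
        real_inner_comm (y k) (w (k-1) - x k)]
    have hyzb : |(⟪y k, z - w (k-1)⟫:ℝ)| ≤ ‖y k‖ * (‖z‖ + PB) := by
      calc |(⟪y k, z - w (k-1)⟫:ℝ)| ≤ ‖y k‖ * ‖z - w (k-1)‖ := abs_real_inner_le_norm _ _
        _ ≤ ‖y k‖ * (‖z‖ + ‖w (k-1)‖) :=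
            mul_le_mul_of_nonneg_left (norm_sub_le _ _) (norm_nonneg _)
        _ ≤ ‖y k‖ * (‖z‖ + PB) := by
            apply mul_le_mul_of_nonneg_left _ (norm_nonneg _)
            linarith [hwb (k-1)]
    have htb : |(⟪w (k-1) - x k, y k⟫:ℝ)| ≤ (σ/2) * ((c k * ‖U k‖) * ‖U k‖) := by
      have he := herr k hk
      have h1 : (2 / c k) * |(⟪w (k-1) - x k, y k⟫:ℝ)| ≤ σ * ‖U k‖^2 := by
        nlinarith [sq_nonneg ‖y k‖]
      have h3 := mul_le_mul_of_nonneg_left h1 (by linarith [hcpos k] : (0:ℝ) ≤ c k / 2)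
      have hc0 : c k ≠ 0 := ne_of_gt (hcpos k)
      have e1 : c k / 2 * ((2 / c k) * |(⟪w (k-1) - x k, y k⟫:ℝ)|)
          = |(⟪w (k-1) - x k, y k⟫:ℝ)| := by
        field_simp
      have e2 : c k / 2 * (σ * ‖U k‖^2) = (σ/2) * ((c k * ‖U k‖) * ‖U k‖) := by ring
      rw [e1, e2] at h3
      exact h3
    have b1 : -(‖U k‖ * (‖mkDual ls ms‖ + PB)) ≤ (⟪U k, mkDual ls ms - P k⟫:ℝ) := by
      have := neg_le_abs (⟪U k, mkDual ls ms - P k⟫:ℝ)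
      linarith [hQPb]
    have b2 : -(‖y k‖ * (‖z‖ + PB)) ≤ (⟪y k, z - w (k-1)⟫:ℝ) := by
      have := neg_le_abs (⟪y k, z - w (k-1)⟫:ℝ)
      linarith [hyzb]
    have b3 : -((σ/2) * ((c k * ‖U k‖) * ‖U k‖)) ≤ (⟪w (k-1) - x k, y k⟫:ℝ) := by
      have := neg_le_abs (⟪w (k-1) - x k, y k⟫:ℝ)
      linarith [htb]
    rw [← hQP] at b1
    rw [hyz] at a1
    generalize hA1' : (⟪y k, z - w (k-1)⟫:ℝ) = i1 at a1 b2
    generalize hA2' : (⟪w (k-1) - x k, y k⟫:ℝ) = i2 at a1 b3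
    generalize hA3' : (⟪-(h (x k)), ls - lam k⟫:ℝ) = j1 at a4 b1
    generalize hA4' : (⟪Umu k, ms - mu k⟫:ℝ) = j2 at a4 b1
    generalize hA5' : Lag f h g (x k) (lam k) (mu k) = L1 at a1 a4
    generalize hA6' : Lag f h g z (lam k) (mu k) = L2 at a1 ⊢
    generalize hA7' : Lag f h g (x k) ls ms = L3 at a3 a4
    generalize hA8' : ‖U k‖ * (‖mkDual ls ms‖ + PB) = B1 at b1 ⊢
    generalize hA9' : ‖y k‖ * (‖z‖ + PB) = B2 at b2 ⊢
    generalize hA10' : (σ/2) * ((c k * ‖U k‖) * ‖U k‖) = B3 at b3 ⊢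
    linarith only [a1, a3, a4, b1, b2, b3]
  -- Lagrangian as inner product with the dual vector
  have hlagP : ∀ (z : X) (k : ℕ),
      Lag f h g z (lam k) (mu k) = f z + ⟪P k, mkDual (h z) (g z)⟫ := by
    intro z k
    have e : (⟪P k, mkDual (h z) (g z)⟫:ℝ) = ⟪lam k, h z⟫ + ⟪mu k, g z⟫ := rfl
    rw [e]
    unfold Lag
    ring
  have hlagq : ∀ (z : X) (q : DualPair m1 m2),
      Lag f h g z q.ofLp.1 q.ofLp.2 = f z + ⟪q, mkDual (h z) (g z)⟫ := by
    intro z q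
    have e : (⟪q, mkDual (h z) (g z)⟫:ℝ) = ⟪q.ofLp.1, h z⟫ + ⟪q.ofLp.2, g z⟫ := rfl
    rw [e]
    unfold Lag
    ring
  -- any limit point of a subsequence of P is "good"
  have hgoodlim : ∀ (q : DualPair m1 m2) (φ : ℕ → ℕ), Tendsto φ atTop atTop →
      Tendsto (fun j => P (φ j)) atTop (nhds q) →
      (∀ i, 0 ≤ q.ofLp.2 i) ∧ (∀ z : X, f xs ≤ Lag f h g z q.ofLp.1 q.ofLp.2) := by
    intro q φ hφ hPq
    have hUφ : Tendsto (fun j => ‖U (φ j)‖) atTop (nhds 0) := hU0.comp hφ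
    have hyφ : Tendsto (fun j => ‖y (φ j)‖) atTop (nhds 0) := hy0.comp hφ
    have hcUφ : Tendsto (fun j => c (φ j) * ‖U (φ j)‖) atTop (nhds 0) := hcU0.comp hφ
    have hev1 : ∀ᶠ j in atTop, 1 ≤ φ j := hφ.eventually_ge_atTop 1
    constructor
    · intro i
      have hcont : Tendsto (fun j => (⟪P (φ j), mkDual 0 (EuclideanSpace.single i 1)⟫:ℝ))
          atTop (nhds (⟪q, mkDual 0 (EuclideanSpace.single i 1)⟫:ℝ)) :=
        hPq.inner tendsto_const_nhds
      have he : ∀ p : DualPair m1 m2,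
          (⟪p, mkDual 0 (EuclideanSpace.single i 1)⟫:ℝ) = p.ofLp.2 i := by
        intro p
        have e : (⟪p, mkDual 0 (EuclideanSpace.single i 1)⟫:ℝ)
            = ⟪p.ofLp.1, (0:Evec m1)⟫ + ⟪p.ofLp.2, EuclideanSpace.single i 1⟫ := rfl
        rw [e, inner_zero_right, EuclideanSpace.inner_single_right]
        simp
      rw [he q] at hcont
      apply ge_of_tendsto' hcont
      intro j
      rw [he (P (φ j))]
      exact hmun (φ j) i
    · intro z
      have herrlim : Tendsto (fun j => f xs - (‖U (φ j)‖ * (‖mkDual ls ms‖ + PB)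
          + ‖y (φ j)‖ * (‖z‖ + PB)
          + (σ/2) * ((c (φ j) * ‖U (φ j)‖) * ‖U (φ j)‖))) atTop (nhds (f xs)) := by
        have t1 := hUφ.mul_const (‖mkDual ls ms‖ + PB)
        have t2 := hyφ.mul_const (‖z‖ + PB)
        have t3 := (hcUφ.mul hUφ).const_mul (σ/2)
        have t4 := (t1.add t2).add t3
        have t5 := (tendsto_const_nhds (x := f xs) (f := atTop (α := ℕ))).sub t4
        simpa using t5
      have hLlim : Tendsto (fun j => Lag f h g z (lam (φ j)) (mu (φ j))) atTop
          (nhds (Lag f h g z q.ofLp.1 q.ofLp.2)) := by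
        have e : (fun j => Lag f h g z (lam (φ j)) (mu (φ j)))
            = fun j => f z + ⟪P (φ j), mkDual (h z) (g z)⟫ :=
          funext fun j => hlagP z (φ j)
        rw [e, hlagq]
        exact tendsto_const_nhds.add (hPq.inner tendsto_const_nhds)
      apply le_of_tendsto_of_tendsto herrlim hLlim
      filter_upwards [hev1] with j hj
      exact hlow_k z (φ j) hj
  -- a good dual point together with xs is a saddle point
  have hmkgood : ∀ q : DualPair m1 m2, (∀ i, 0 ≤ q.ofLp.2 i) →
      (∀ z : X, f xs ≤ Lag f h g z q.ofLp.1 q.ofLp.2) → saddleSubdiff f h g xs q.ofLp.1 q.ofLp.2 0 0 0 := by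
    intro q hq1 hq2
    have hEq : Lag f h g xs q.ofLp.1 q.ofLp.2 = f xs :=
      le_antisymm (hweak q.ofLp.1 q.ofLp.2 hq1) (hq2 xs)
    constructor
    · intro z
      rw [inner_zero_left, add_zero, hEq]
      exact hq2 z
    · intro lam' mu' hmu'
      simp only [inner_zero_left, sub_zero]
      rw [hEq]
      exact hweak lam' mu' hmu'
  -- extraction of a convergent subsequence
  have hPin : ∀ k, P k ∈ Metric.closedBall (0 : DualPair m1 m2) PB := by
    intro k
    rw [Metric.mem_closedBall, dist_zero_right]
    exact hPb k
  obtain ⟨q, _, φ, hφmono, hφlim⟩ :=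
    tendsto_subseq_of_bounded Metric.isBounded_closedBall hPin
  have hgoodq := hgoodlim q φ hφmono.tendsto_atTop hφlim
  have hsadq := hmkgood q hgoodq.1 hgoodq.2
  -- Fejér sequences for good points converge
  have hDconv : ∀ r : DualPair m1 m2, (∀ i, 0 ≤ r.ofLp.2 i) →
      saddleSubdiff f h g xs r.ofLp.1 r.ofLp.2 0 0 0 →
      ∃ l, Tendsto (fun k => ‖S k - asT (xs, r)‖^2) atTop (nhds l) := by
    intro r hr1 hr2
    have hanti : Antitone (fun k => ‖S k - asT (xs, r)‖^2) := by
      apply antitone_nat_of_succ_le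
      intro n
      have h1 := hFejer xs r.ofLp.1 r.ofLp.2 hr1 hr2 (n+1) (Nat.le_add_left 1 n)
      simp only [Nat.add_sub_cancel] at h1
      have h2 : asT (xs, mkDual r.ofLp.1 r.ofLp.2) = asT (xs, r) := rfl
      rw [h2] at h1
      have h3 : 0 ≤ (1-σ) * (c (n+1))^2 * ‖U (n+1)‖^2 := by positivity
      linarith
    exact ⟨_, tendsto_atTop_ciInf hanti ⟨0, by rintro _ ⟨k, rfl⟩; positivity⟩⟩
  -- uniqueness of good subsequential limits
  have huniq : ∀ q' : DualPair m1 m2, (∀ i, 0 ≤ q'.ofLp.2 i) →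
      saddleSubdiff f h g xs q'.ofLp.1 q'.ofLp.2 0 0 0 →
      ∀ ψ : ℕ → ℕ, Tendsto ψ atTop atTop →
      Tendsto (fun j => P (ψ j)) atTop (nhds q') → q' = q := by
    intro q' hq'1 hq'2 ψ hψ hψlim
    obtain ⟨l1, hl1⟩ := hDconv q hgoodq.1 hsadq
    obtain ⟨l2, hl2⟩ := hDconv q' hq'1 hq'2
    have hteq : ∀ k, (⟪P k, q - q'⟫:ℝ)
        = (‖asT (xs, q)‖^2 - ‖asT (xs, q')‖^2
            - (‖S k - asT (xs,q)‖^2 - ‖S k - asT (xs,q')‖^2))/2 := by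
      intro k
      have e1 := norm_sub_sq_real (S k) (asT (xs,q))
      have e2 := norm_sub_sq_real (S k) (asT (xs,q'))
      have e3 : (⟪S k, asT (xs,q)⟫:ℝ) - ⟪S k, asT (xs,q')⟫ = ⟪P k, q - q'⟫ := by
        rw [← inner_sub_right]
        have e4 : asT (xs,q) - asT (xs,q') = asT (xs - xs, q - q') := rfl
        rw [e4, sub_self]
        have e5 : (⟪S k, asT ((0:X), q - q')⟫:ℝ) = ⟪w k, (0:X)⟫ + ⟪P k, q - q'⟫ := rfl
        rw [e5, inner_zero_right, zero_add]
      linarith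
    have htconv : Tendsto (fun k => (⟪P k, q - q'⟫:ℝ)) atTop
        (nhds ((‖asT (xs, q)‖^2 - ‖asT (xs, q')‖^2 - (l1 - l2))/2)) := by
      have t1 := ((tendsto_const_nhds
        (x := ‖asT (xs, q)‖^2 - ‖asT (xs, q')‖^2) (f := atTop (α := ℕ))).sub
        (hl1.sub hl2)).div_const 2
      have e : (fun k => (‖asT (xs, q)‖^2 - ‖asT (xs, q')‖^2
          - (‖S k - asT (xs,q)‖^2 - ‖S k - asT (xs,q')‖^2))/2)
          = fun k => (⟪P k, q - q'⟫:ℝ) := funext fun k => (hteq k).symm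
      rwa [e] at t1
    have lim1 : Tendsto (fun j => (⟪P (φ j), q - q'⟫:ℝ)) atTop (nhds ⟪q, q - q'⟫) :=
      hφlim.inner tendsto_const_nhds
    have lim1' : Tendsto (fun j => (⟪P (φ j), q - q'⟫:ℝ)) atTop
        (nhds ((‖asT (xs, q)‖^2 - ‖asT (xs, q')‖^2 - (l1 - l2))/2)) :=
      htconv.comp hφmono.tendsto_atTop
    have lim2 : Tendsto (fun j => (⟪P (ψ j), q - q'⟫:ℝ)) atTop (nhds ⟪q', q - q'⟫) :=
      hψlim.inner tendsto_const_nhds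
    have lim2' : Tendsto (fun j => (⟪P (ψ j), q - q'⟫:ℝ)) atTop
        (nhds ((‖asT (xs, q)‖^2 - ‖asT (xs, q')‖^2 - (l1 - l2))/2)) :=
      htconv.comp hψ
    have hq1' := tendsto_nhds_unique lim1 lim1'
    have hq2' := tendsto_nhds_unique lim2 lim2'
    have : (⟪q - q', q - q'⟫:ℝ) = 0 := by
      rw [inner_sub_left]
      rw [hq1', hq2']
      ring
    have := inner_self_eq_zero.mp this
    rw [sub_eq_zero] at this
    exact this.symm
  -- conclusion
  refine ⟨q, ?_, ?_⟩
  · refine ⟨q.ofLp.1, q.ofLp.2, rfl, hgoodq.1, ?_⟩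
    intro lam' mu' hmu'
    have h1 : dualFun f h g lam' mu' ≤ ((f xs : ℝ) : EReal) := by
      apply le_trans (iInf_le _ xs)
      exact EReal.coe_le_coe_iff.2 (hweak lam' mu' hmu')
    have h2 : ((f xs : ℝ) : EReal) ≤ dualFun f h g q.ofLp.1 q.ofLp.2 :=
      le_iInf fun z => EReal.coe_le_coe_iff.2 (hgoodq.2 z)
    exact le_trans h1 h2
  · apply tendsto_of_subseq_tendsto
    intro ns hns
    have hin : ∀ j, P (ns j) ∈ Metric.closedBall (0 : DualPair m1 m2) PB :=
      fun j => hPin (ns j)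
    obtain ⟨q', _, ms', hms'mono, hms'lim⟩ :=
      tendsto_subseq_of_bounded Metric.isBounded_closedBall hin
    refine ⟨ms', ?_⟩
    have hcomp : Tendsto (fun j => ns (ms' j)) atTop atTop :=
      hns.comp hms'mono.tendsto_atTop
    have hlim2 : Tendsto (fun j => P (ns (ms' j))) atTop (nhds q') := hms'lim
    have hgq' := hgoodlim q' _ hcomp hlim2
    have heq := huniq q' hgq'.1 (hmkgood q' hgq'.1 hgq'.2) _ hcomp hlim2
    rw [heq] at hlim2
    exact hlim2
end
end
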